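/- arXiv:1010.1857 — 6 statements merged into one kernel-verified Lean document; each statement's English description precedes it below -/
import Mathlib

section
/- Suppose K satisfies K(x,y) ≤ K₀(x^α y^β + x^β y^α) with 0 < α ≤ β < 1/2 and α + β = 2λ < 1. Then the integral ∫₀¹ s^{-2λ} ∫_{1-s}^∞ K(s,t) t^{-(1+2λ)} dt ds is finite and strictly positive, so the constant h_λ defined as its reciprocal is a well-defined positive real number. -/
open MeasureTheory Real Set

/-- Beta-type integrability: `s^p (1-s)^q` is integrable on `(0,1)` when `p, q > -1`. -/
lemma beta_integrable {p q : ℝ} (hp : -1 < p) (hq : -1 < q) :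
    IntegrableOn (fun s : ℝ => s ^ p * (1 - s) ^ q) (Set.Ioo (0:ℝ) 1) := by
  have hmeas : Measurable (fun s : ℝ => s ^ p * (1 - s) ^ q) := by fun_prop
  have hbound : ∀ x : ℝ, 0 < x → x ≤ 1 → ∀ r : ℝ, x ^ r ≤ (1/2 : ℝ) ^ r + 1 ∨ ¬ (1/2 ≤ x) := by
    intro x hx hx1 r
    by_cases h : (1/2 : ℝ) ≤ x
    · left
      rcases le_or_gt r 0 with hr | hr
      · have := Real.rpow_le_rpow_of_nonpos (by norm_num : (0:ℝ) < 1/2) h hr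
        nlinarith [Real.rpow_nonneg (show (0:ℝ) ≤ 1/2 by norm_num) r]
      · have := Real.rpow_le_one hx.le hx1 hr.le
        nlinarith [Real.rpow_nonneg (show (0:ℝ) ≤ 1/2 by norm_num) r]
    · right; exact h
  set C : ℝ := (1/2 : ℝ) ^ q + 1 with hC
  set C' : ℝ := (1/2 : ℝ) ^ p + 1 with hC'
  -- integrability on the left half
  have h1 : IntegrableOn (fun s : ℝ => s ^ p * (1 - s) ^ q) (Set.Ioc (0:ℝ) (1/2)) := by
    have hint : IntegrableOn (fun s : ℝ => C * s ^ p) (Set.Ioc (0:ℝ) (1/2)) := by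
      have := (intervalIntegral.intervalIntegrable_rpow' hp (a := 0) (b := 1/2))
      rw [intervalIntegrable_iff_integrableOn_Ioc_of_le (by norm_num)] at this
      exact this.const_mul C
    refine hint.mono' hmeas.aestronglyMeasurable ?_
    rw [ae_restrict_iff' measurableSet_Ioc]
    refine Filter.Eventually.of_forall (fun s hs => ?_)
    have hs0 : 0 < s := hs.1
    have hs2 : s ≤ 1/2 := hs.2
    have h1s : (1/2 : ℝ) ≤ 1 - s := by linarith
    have h1s0 : (0:ℝ) < 1 - s := by linarith
    have hql : (1 - s) ^ q ≤ C := by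
      rcases hbound (1 - s) h1s0 (by linarith) q with h | h
      · exact h
      · exact absurd h1s h
    have : s ^ p * (1 - s) ^ q ≤ s ^ p * C :=
      mul_le_mul_of_nonneg_left hql (Real.rpow_nonneg hs0.le p)
    rw [Real.norm_eq_abs, abs_of_nonneg (mul_nonneg (Real.rpow_nonneg hs0.le p)
      (Real.rpow_nonneg h1s0.le q))]
    linarith [this]
  -- integrability on the right half
  have h2 : IntegrableOn (fun s : ℝ => s ^ p * (1 - s) ^ q) (Set.Ioc (1/2:ℝ) 1) := by
    have hint : IntegrableOn (fun s : ℝ => C' * (1 - s) ^ q) (Set.Ioc (1/2:ℝ) 1) := by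
      have h0 := (intervalIntegral.intervalIntegrable_rpow' hq (a := 0) (b := 1/2))
      have h1 := (h0.comp_sub_left 1).symm
      norm_num at h1
      rw [intervalIntegrable_iff_integrableOn_Ioc_of_le (by norm_num)] at h1
      exact h1.const_mul C'
    refine hint.mono' hmeas.aestronglyMeasurable ?_
    rw [ae_restrict_iff' measurableSet_Ioc]
    refine Filter.Eventually.of_forall (fun s hs => ?_)
    have hs0 : (1/2:ℝ) < s := hs.1
    have hs1 : s ≤ 1 := hs.2
    have h1s0 : (0:ℝ) ≤ 1 - s := by linarith
    have hpl : s ^ p ≤ C' := by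
      rcases hbound s (by linarith) hs1 p with h | h
      · exact h
      · exact absurd hs0.le h
    have : s ^ p * (1 - s) ^ q ≤ C' * (1 - s) ^ q :=
      mul_le_mul_of_nonneg_right hpl (Real.rpow_nonneg h1s0 q)
    rw [Real.norm_eq_abs, abs_of_nonneg (mul_nonneg (Real.rpow_nonneg (by linarith : (0:ℝ) ≤ s) p)
      (Real.rpow_nonneg h1s0 q))]
    linarith [this]
  have hsub : Set.Ioo (0:ℝ) 1 ⊆ Set.Ioc (0:ℝ) (1/2) ∪ Set.Ioc (1/2:ℝ) 1 := by
    intro x hx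
    rcases le_or_gt x (1/2) with h | h
    · exact Or.inl ⟨hx.1, h⟩
    · exact Or.inr ⟨h, hx.2.le⟩
  exact (h1.union h2).mono_set hsub

/-- the integral defining `h_λ⁻¹` is finite and strictly positive. -/
theorem hlambda_well_defined
    (K : ℝ → ℝ → ℝ) (K₀ k₀ α β lam : ℝ)
    (hK₀ : 0 < K₀) (hk₀ : 0 < k₀)
    (hα : 0 < α) (hαβ : α ≤ β) (hβ : β < 1/2)
    (hsum : α + β = 2*lam)
    (hmeas : Measurable (Function.uncurry K))
    (hnonneg : ∀ x y : ℝ, 0 < x → 0 < y → 0 ≤ K x y)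
    (hsymm : ∀ x y : ℝ, K x y = K y x)
    (hup : ∀ x y : ℝ, 0 < x → 0 < y → K x y ≤ K₀ * (x ^ α * y ^ β + x ^ β * y ^ α))
    (hlow : ∀ x y : ℝ, x ∈ Set.Icc (1/4 : ℝ) 1 → y ∈ Set.Icc (1/4 : ℝ) 1 → k₀ ≤ K x y) :
    (∀ s ∈ Set.Ioo (0:ℝ) 1,
        IntegrableOn (fun t => K s t * t ^ (-(1+2*lam))) (Set.Ioi (1-s)))
    ∧ IntegrableOn
        (fun s => s ^ (-(2*lam)) * ∫ t in Set.Ioi (1-s), K s t * t ^ (-(1+2*lam)))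
        (Set.Ioo (0:ℝ) 1)
    ∧ 0 < ∫ s in Set.Ioo (0:ℝ) 1,
        s ^ (-(2*lam)) * ∫ t in Set.Ioi (1-s), K s t * t ^ (-(1+2*lam)) := by
  have hβ0 : 0 < β := lt_of_lt_of_le hα hαβ
  have hα1 : -(1+α) < -1 := by linarith
  have hβ1 : -(1+β) < -1 := by linarith
  -- pointwise bound for the inner integrand
  have hptbd : ∀ s : ℝ, 0 < s → ∀ t : ℝ, 0 < t →
      K s t * t ^ (-(1+2*lam)) ≤ K₀ * s ^ α * t ^ (-(1+α)) + K₀ * s ^ β * t ^ (-(1+β)) := by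
    intro s hs t ht
    calc K s t * t ^ (-(1+2*lam))
        ≤ K₀ * (s ^ α * t ^ β + s ^ β * t ^ α) * t ^ (-(1+2*lam)) :=
          mul_le_mul_of_nonneg_right (hup s t hs ht) (Real.rpow_nonneg ht.le _)
      _ = K₀ * s ^ α * t ^ (-(1+α)) + K₀ * s ^ β * t ^ (-(1+β)) := by
          rw [show -(1+α) = β + -(1+2*lam) by linarith, show -(1+β) = α + -(1+2*lam) by linarith,
            Real.rpow_add ht, Real.rpow_add ht]
          ring
  -- measurability of sections
  have hKsec : ∀ s : ℝ, Measurable (fun t => K s t * t ^ (-(1+2*lam))) := by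
    intro s
    exact (hmeas.comp measurable_prodMk_left).mul (by fun_prop)
  -- Part 1
  have hpart1 : ∀ s ∈ Set.Ioo (0:ℝ) 1,
      IntegrableOn (fun t => K s t * t ^ (-(1+2*lam))) (Set.Ioi (1-s)) := by
    intro s hs
    have hc : 0 < 1 - s := by linarith [hs.2]
    have hbd : IntegrableOn (fun t : ℝ => K₀ * s ^ α * t ^ (-(1+α)) + K₀ * s ^ β * t ^ (-(1+β)))
        (Set.Ioi (1-s)) :=
      ((integrableOn_Ioi_rpow_of_lt hα1 hc).const_mul _).add
        ((integrableOn_Ioi_rpow_of_lt hβ1 hc).const_mul _)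
    refine hbd.mono' (hKsec s).aestronglyMeasurable ?_
    rw [ae_restrict_iff' measurableSet_Ioi]
    refine Filter.Eventually.of_forall (fun t ht => ?_)
    have ht0 : 0 < t := lt_trans hc ht
    rw [Real.norm_eq_abs, abs_of_nonneg (mul_nonneg (hnonneg s t hs.1 ht0)
      (Real.rpow_nonneg ht0.le _))]
    exact hptbd s hs.1 t ht0
  -- inner integral is nonnegative
  have hInonneg : ∀ s ∈ Set.Ioo (0:ℝ) 1,
      0 ≤ ∫ t in Set.Ioi (1-s), K s t * t ^ (-(1+2*lam)) := by
    intro s hs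
    have hc : 0 < 1 - s := by linarith [hs.2]
    refine setIntegral_nonneg measurableSet_Ioi (fun t ht => ?_)
    have ht0 : 0 < t := lt_trans hc ht
    exact mul_nonneg (hnonneg s t hs.1 ht0) (Real.rpow_nonneg ht0.le _)
  -- upper bound for the inner integral
  have hIbd : ∀ s ∈ Set.Ioo (0:ℝ) 1,
      (∫ t in Set.Ioi (1-s), K s t * t ^ (-(1+2*lam)))
        ≤ K₀ * s ^ α * ((1-s) ^ (-α) / α) + K₀ * s ^ β * ((1-s) ^ (-β) / β) := by
    intro s hs
    have hc : 0 < 1 - s := by linarith [hs.2]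
    have hbd1 : IntegrableOn (fun t : ℝ => K₀ * s ^ α * t ^ (-(1+α))) (Set.Ioi (1-s)) :=
      (integrableOn_Ioi_rpow_of_lt hα1 hc).const_mul _
    have hbd2 : IntegrableOn (fun t : ℝ => K₀ * s ^ β * t ^ (-(1+β))) (Set.Ioi (1-s)) :=
      (integrableOn_Ioi_rpow_of_lt hβ1 hc).const_mul _
    have hmono : (∫ t in Set.Ioi (1-s), K s t * t ^ (-(1+2*lam)))
        ≤ ∫ t in Set.Ioi (1-s), (K₀ * s ^ α * t ^ (-(1+α)) + K₀ * s ^ β * t ^ (-(1+β))) := by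
      refine setIntegral_mono_on (hpart1 s hs) (hbd1.add hbd2) measurableSet_Ioi
        (fun t ht => ?_)
      have ht0 : 0 < t := lt_trans hc ht
      exact hptbd s hs.1 t ht0
    rw [integral_add hbd1 hbd2, integral_const_mul, integral_const_mul,
      integral_Ioi_rpow_of_lt hα1 hc, integral_Ioi_rpow_of_lt hβ1 hc] at hmono
    have e1 : -(1+α) + 1 = -α := by ring
    have e2 : -(1+β) + 1 = -β := by ring
    rw [e1, e2] at hmono
    calc (∫ t in Set.Ioi (1-s), K s t * t ^ (-(1+2*lam)))
        ≤ K₀ * s ^ α * (-(1-s) ^ (-α) / -α) + K₀ * s ^ β * (-(1-s) ^ (-β) / -β) := hmono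
      _ = K₀ * s ^ α * ((1-s) ^ (-α) / α) + K₀ * s ^ β * ((1-s) ^ (-β) / β) := by
          rw [neg_div_neg_eq, neg_div_neg_eq]
  -- measurability of the outer integrand
  have houter_meas : AEStronglyMeasurable
      (fun s : ℝ => s ^ (-(2*lam)) * ∫ t in Set.Ioi (1-s), K s t * t ^ (-(1+2*lam)))
      (volume.restrict (Set.Ioo (0:ℝ) 1)) := by
    have hFmeas : Measurable (fun p : ℝ × ℝ =>
        if 1 - p.1 < p.2 then K p.1 p.2 * p.2 ^ (-(1+2*lam)) else 0) := by
      refine Measurable.ite ?_ (hmeas.mul (by fun_prop)) measurable_const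
      exact measurableSet_lt (measurable_const.sub measurable_fst) measurable_snd
    have hsm : StronglyMeasurable (fun s : ℝ =>
        ∫ t : ℝ, if 1 - s < t then K s t * t ^ (-(1+2*lam)) else 0) :=
      hFmeas.stronglyMeasurable.integral_prod_right'
    have heq : (fun s : ℝ => s ^ (-(2*lam)) * ∫ t in Set.Ioi (1-s), K s t * t ^ (-(1+2*lam)))
        = fun s : ℝ => s ^ (-(2*lam)) *
            ∫ t : ℝ, if 1 - s < t then K s t * t ^ (-(1+2*lam)) else 0 := by
      funext s
      congr 1
      rw [← integral_indicator measurableSet_Ioi]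
      congr 1
    have : StronglyMeasurable (fun s : ℝ =>
        s ^ (-(2*lam)) * ∫ t in Set.Ioi (1-s), K s t * t ^ (-(1+2*lam))) := by
      rw [heq]
      have hm : Measurable (fun s : ℝ => s ^ (-(2*lam))) := by fun_prop
      exact hm.stronglyMeasurable.mul hsm
    exact this.aestronglyMeasurable
  -- Part 2
  have hpart2 : IntegrableOn
      (fun s => s ^ (-(2*lam)) * ∫ t in Set.Ioi (1-s), K s t * t ^ (-(1+2*lam)))
      (Set.Ioo (0:ℝ) 1) := by
    have hB : IntegrableOn (fun s : ℝ =>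
        (K₀/α) * (s ^ (-β) * (1-s) ^ (-α)) + (K₀/β) * (s ^ (-α) * (1-s) ^ (-β)))
        (Set.Ioo (0:ℝ) 1) := by
      have h1 := (beta_integrable (p := -β) (q := -α) (by linarith) (by linarith)).const_mul (K₀/α)
      have h2 := (beta_integrable (p := -α) (q := -β) (by linarith) (by linarith)).const_mul (K₀/β)
      exact h1.add h2
    refine hB.mono' houter_meas ?_
    rw [ae_restrict_iff' measurableSet_Ioo]
    refine Filter.Eventually.of_forall (fun s hs => ?_)
    have hs0 : 0 < s := hs.1
    have hc : 0 < 1 - s := by linarith [hs.2]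
    have hsa : s ^ (-(2*lam)) * s ^ α = s ^ (-β) := by
      rw [← Real.rpow_add hs0]; congr 1; linarith
    have hsb : s ^ (-(2*lam)) * s ^ β = s ^ (-α) := by
      rw [← Real.rpow_add hs0]; congr 1; linarith
    have hnn := hInonneg s hs
    rw [Real.norm_eq_abs, abs_of_nonneg (mul_nonneg (Real.rpow_nonneg hs0.le _) hnn)]
    calc s ^ (-(2*lam)) * ∫ t in Set.Ioi (1-s), K s t * t ^ (-(1+2*lam))
        ≤ s ^ (-(2*lam)) *
            (K₀ * s ^ α * ((1-s) ^ (-α) / α) + K₀ * s ^ β * ((1-s) ^ (-β) / β)) :=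
          mul_le_mul_of_nonneg_left (hIbd s hs) (Real.rpow_nonneg hs0.le _)
      _ = (K₀/α) * (s ^ (-β) * (1-s) ^ (-α)) + (K₀/β) * (s ^ (-α) * (1-s) ^ (-β)) := by
          rw [← hsa, ← hsb]; ring
  -- Part 3: positivity
  refine ⟨hpart1, hpart2, ?_⟩
  set f : ℝ → ℝ := fun s => s ^ (-(2*lam)) * ∫ t in Set.Ioi (1-s), K s t * t ^ (-(1+2*lam))
    with hf
  have hfnn : ∀ s ∈ Set.Ioo (0:ℝ) 1, 0 ≤ f s := fun s hs =>
    mul_nonneg (Real.rpow_nonneg hs.1.le _) (hInonneg s hs)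
  have hfnn_ae : 0 ≤ᵐ[volume.restrict (Set.Ioo (0:ℝ) 1)] f := by
    filter_upwards [self_mem_ae_restrict measurableSet_Ioo] with s hs
    exact hfnn s hs
  have hlb : ∀ s ∈ Set.Icc (1/2:ℝ) (3/4), k₀/2 ≤ f s := by
    intro s hs
    have hsIoo : s ∈ Set.Ioo (0:ℝ) 1 := ⟨by linarith [hs.1], by linarith [hs.2]⟩
    have hc : 0 < 1 - s := by linarith [hsIoo.2]
    have hsub : Set.Ioo (1/2:ℝ) 1 ⊆ Set.Ioi (1-s) := by
      intro t ht
      have : 1 - s ≤ 1/2 := by linarith [hs.1]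
      exact lt_of_le_of_lt this ht.1
    have hnnIoi : 0 ≤ᵐ[volume.restrict (Set.Ioi (1-s))]
        (fun t => K s t * t ^ (-(1+2*lam))) := by
      filter_upwards [self_mem_ae_restrict (measurableSet_Ioi : MeasurableSet (Set.Ioi (1-s)))]
        with t ht
      have ht0 : 0 < t := lt_trans hc ht
      exact mul_nonneg (hnonneg s t hsIoo.1 ht0) (Real.rpow_nonneg ht0.le _)
    have hstep1 : (∫ t in Set.Ioo (1/2:ℝ) 1, K s t * t ^ (-(1+2*lam)))
        ≤ ∫ t in Set.Ioi (1-s), K s t * t ^ (-(1+2*lam)) :=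
      setIntegral_mono_set (hpart1 s hsIoo) hnnIoi (HasSubset.Subset.eventuallyLE hsub)
    have hconst : ∀ t ∈ Set.Ioo (1/2:ℝ) 1, k₀ ≤ K s t * t ^ (-(1+2*lam)) := by
      intro t ht
      have ht0 : (0:ℝ) < t := by linarith [ht.1]
      have hK : k₀ ≤ K s t :=
        hlow s t ⟨by linarith [hs.1], by linarith [hs.2]⟩ ⟨by linarith [ht.1], ht.2.le⟩
      have hrpow : 1 ≤ t ^ (-(1+2*lam)) := by
        refine Real.one_le_rpow_of_pos_of_le_one_of_nonpos ht0 ht.2.le ?_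
        have : 0 < 2*lam := by linarith
        linarith
      calc k₀ = k₀ * 1 := (mul_one k₀).symm
        _ ≤ K s t * t ^ (-(1+2*lam)) :=
          mul_le_mul hK hrpow zero_le_one (le_trans hk₀.le hK)
    have hintIoo : IntegrableOn (fun t => K s t * t ^ (-(1+2*lam))) (Set.Ioo (1/2:ℝ) 1) :=
      (hpart1 s hsIoo).mono_set hsub
    have hstep2 : k₀ * (volume (Set.Ioo (1/2:ℝ) 1)).toReal
        ≤ ∫ t in Set.Ioo (1/2:ℝ) 1, K s t * t ^ (-(1+2*lam)) :=
      setIntegral_ge_of_const_le_real measurableSet_Ioo (by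
        rw [Real.volume_Ioo]; exact ENNReal.ofReal_ne_top) hconst hintIoo
    have hvol : (volume (Set.Ioo (1/2:ℝ) 1)).toReal = 1/2 := by
      rw [Real.volume_Ioo, ENNReal.toReal_ofReal (by norm_num)]; norm_num
    rw [hvol] at hstep2
    have hI : k₀/2 ≤ ∫ t in Set.Ioi (1-s), K s t * t ^ (-(1+2*lam)) := by
      linarith
    have hs2lam : 1 ≤ s ^ (-(2*lam)) := by
      refine Real.one_le_rpow_of_pos_of_le_one_of_nonpos hsIoo.1 hsIoo.2.le ?_
      have : 0 < 2*lam := by linarith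
      linarith
    calc k₀/2 = 1 * (k₀/2) := (one_mul _).symm
      _ ≤ s ^ (-(2*lam)) * ∫ t in Set.Ioi (1-s), K s t * t ^ (-(1+2*lam)) :=
        mul_le_mul hs2lam hI (by linarith) (by linarith [hs2lam])
  have hsubIcc : Set.Icc (1/2:ℝ) (3/4) ⊆ Set.Ioo (0:ℝ) 1 := by
    intro x hx; exact ⟨by linarith [hx.1], by linarith [hx.2]⟩
  have hintIcc : IntegrableOn f (Set.Icc (1/2:ℝ) (3/4)) := hpart2.mono_set hsubIcc
  have hstepA : (∫ s in Set.Icc (1/2:ℝ) (3/4), f s) ≤ ∫ s in Set.Ioo (0:ℝ) 1, f s :=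
    setIntegral_mono_set hpart2 hfnn_ae (HasSubset.Subset.eventuallyLE hsubIcc)
  have hstepB : (k₀/2) * (volume (Set.Icc (1/2:ℝ) (3/4))).toReal
      ≤ ∫ s in Set.Icc (1/2:ℝ) (3/4), f s :=
    setIntegral_ge_of_const_le_real measurableSet_Icc (by
      rw [Real.volume_Icc]; exact ENNReal.ofReal_ne_top) hlb hintIcc
  have hvol : (volume (Set.Icc (1/2:ℝ) (3/4))).toReal = 1/4 := by
    rw [Real.volume_Icc, ENNReal.toReal_ofReal (by norm_num)]; norm_num
  rw [hvol] at hstepB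
  have : 0 < (k₀/2) * (1/4) := by positivity
  linarith
end

section
/- Let h: (0,∞) → [0,∞) be measurable and satisfy h(x) = h_λ x^{2λ-1} ∫₀^x y^{-2λ} h(y) ∫_{x-y}^∞ K(y,z) z^{-(1+2λ)} h(z) dz dy for a.e. x > 0. Then there exists a constant C depending only on λ, α, k₀ such that for every R > 0, the average (2/R) ∫_{R/2}^R h(x) dx ≤ C. -/
open MeasureTheory Real Set
open scoped ENNReal

lemma ptwise_bound
    (K : ℝ → ℝ → ℝ) (k₀ lam hl : ℝ) (hk₀ : 0 < k₀) (hlam : 0 < lam)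
    (hhom : ∀ a x y : ℝ, 0 < a → 0 < x → 0 < y → K (a*x) (a*y) = a ^ (2*lam) * K x y)
    (hlow : ∀ x y : ℝ, x ∈ Set.Icc (1/4 : ℝ) 1 → y ∈ Set.Icc (1/4 : ℝ) 1 → k₀ ≤ K x y)
    (hlpos : 0 < hl)
    (h : ℝ → ℝ) (hmeas : Measurable h) (hnn : ∀ x > (0:ℝ), 0 ≤ h x)
    (heq : ∀ᵐ x ∂(volume.restrict (Set.Ioi (0:ℝ))),
      ENNReal.ofReal (h x)
        = ENNReal.ofReal (hl * x ^ (2*lam - 1))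
          * ∫⁻ y in Set.Ioo (0:ℝ) x,
              ENNReal.ofReal (y ^ (-(2*lam)) * h y)
              * ∫⁻ z in Set.Ioi (x - y),
                  ENNReal.ofReal (K y z * z ^ (-(1+2*lam)) * h z)) :
    ∀ᵐ x ∂(volume.restrict (Set.Ioi (0:ℝ))),
      ENNReal.ofReal (hl * k₀ / (x*x)) *
        ((∫⁻ y in Set.Ioo (x/2) x, ENNReal.ofReal (h y)) *
         (∫⁻ y in Set.Ioo (x/2) x, ENNReal.ofReal (h y))) ≤ ENNReal.ofReal (h x) := by
  filter_upwards [heq, ae_restrict_mem measurableSet_Ioi] with x hx hx0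
  rw [Set.mem_Ioi] at hx0
  set P : ℝ≥0∞ := ∫⁻ y in Set.Ioo (x/2) x, ENNReal.ofReal (h y) with hP
  have hmE : Measurable fun y : ℝ => ENNReal.ofReal (h y) := hmeas.ennreal_ofReal
  -- membership facts for window
  have hwin : ∀ y ∈ Set.Ioo (x/2) x, 0 < y ∧ y ≤ x ∧ y/x ∈ Set.Icc (1/4:ℝ) 1 := by
    intro y hy
    obtain ⟨hy1, hy2⟩ := hy
    have hy0 : 0 < y := lt_trans (by positivity) hy1
    refine ⟨hy0, le_of_lt hy2, ?_, ?_⟩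
    · rw [le_div_iff₀ hx0]; nlinarith
    · rw [div_le_one hx0]; exact le_of_lt hy2
  -- the constant κ = k₀ * (x^{2λ} * x^{-(1+2λ)})
  set κ : ℝ := k₀ * (x ^ (2*lam) * x ^ (-(1+2*lam))) with hκdef
  have hκ0 : 0 ≤ κ := by positivity
  -- inner integral bound
  have hinner : ∀ y ∈ Set.Ioo (x/2) x,
      ENNReal.ofReal κ * P ≤
        ∫⁻ z in Set.Ioi (x - y), ENNReal.ofReal (K y z * z ^ (-(1+2*lam)) * h z) := by
    intro y hy
    obtain ⟨hy0, hyx, hyIcc⟩ := hwin y hy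
    have hsub : Set.Ioo (x/2) x ⊆ Set.Ioi (x - y) := by
      intro z hz
      have : x - y < x/2 := by
        have := hy.1; simp only [Set.mem_Ioo] at *
        linarith
      exact lt_trans this hz.1
    calc ENNReal.ofReal κ * P
        = ∫⁻ z in Set.Ioo (x/2) x, ENNReal.ofReal κ * ENNReal.ofReal (h z) := by
          rw [lintegral_const_mul _ hmE]
      _ ≤ ∫⁻ z in Set.Ioo (x/2) x, ENNReal.ofReal (K y z * z ^ (-(1+2*lam)) * h z) := by
          apply setLIntegral_mono' measurableSet_Ioo
          intro z hz
          obtain ⟨hz0, hzx, hzIcc⟩ := hwin z hz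
          rw [← ENNReal.ofReal_mul hκ0]
          apply ENNReal.ofReal_le_ofReal
          have hKlow : k₀ * x ^ (2*lam) ≤ K y z := by
            have hyz : K y z = x ^ (2*lam) * K (y/x) (z/x) := by
              have h1 : y = x * (y/x) := by field_simp
              have h2 : z = x * (z/x) := by field_simp
              calc K y z = K (x * (y/x)) (x * (z/x)) := by rw [← h1, ← h2]
                _ = x ^ (2*lam) * K (y/x) (z/x) :=
                    hhom x (y/x) (z/x) hx0 (by positivity) (by positivity)
            rw [hyz]
            have := hlow (y/x) (z/x) hyIcc hzIcc
            have hxp : (0:ℝ) ≤ x ^ (2*lam) := le_of_lt (Real.rpow_pos_of_pos hx0 _)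
            nlinarith
          have hzp : x ^ (-(1+2*lam)) ≤ z ^ (-(1+2*lam)) :=
            Real.rpow_le_rpow_of_nonpos hz0 hzx (by linarith)
          have hhz := hnn z hz0
          have hKnn : (0:ℝ) ≤ K y z :=
            le_trans (by positivity) hKlow
          have : κ ≤ K y z * z ^ (-(1+2*lam)) := by
            rw [hκdef]
            calc k₀ * (x ^ (2*lam) * x ^ (-(1+2*lam)))
                = (k₀ * x ^ (2*lam)) * x ^ (-(1+2*lam)) := by ring
              _ ≤ K y z * z ^ (-(1+2*lam)) := by
                  apply mul_le_mul hKlow hzp (le_of_lt (Real.rpow_pos_of_pos hx0 _)) hKnn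
          nlinarith [Real.rpow_pos_of_pos hz0 (-(1+2*lam))]
      _ ≤ _ := lintegral_mono_set hsub
  -- outer bound
  have houter :
      ENNReal.ofReal (x ^ (-(2*lam))) * (ENNReal.ofReal κ * (P * P)) ≤
        ∫⁻ y in Set.Ioo (0:ℝ) x,
          ENNReal.ofReal (y ^ (-(2*lam)) * h y)
            * ∫⁻ z in Set.Ioi (x - y),
                ENNReal.ofReal (K y z * z ^ (-(1+2*lam)) * h z) := by
    have hsub2 : Set.Ioo (x/2) x ⊆ Set.Ioo (0:ℝ) x := by
      intro y hy; exact ⟨lt_trans (by positivity) hy.1, hy.2⟩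
    calc ENNReal.ofReal (x ^ (-(2*lam))) * (ENNReal.ofReal κ * (P * P))
        = ∫⁻ y in Set.Ioo (x/2) x,
            (ENNReal.ofReal (x ^ (-(2*lam))) * (ENNReal.ofReal κ * P)) *
              ENNReal.ofReal (h y) := by
          rw [lintegral_const_mul _ hmE]; ring
      _ ≤ ∫⁻ y in Set.Ioo (x/2) x,
            ENNReal.ofReal (y ^ (-(2*lam)) * h y)
              * ∫⁻ z in Set.Ioi (x - y),
                  ENNReal.ofReal (K y z * z ^ (-(1+2*lam)) * h z) := by
          apply setLIntegral_mono' measurableSet_Ioo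
          intro y hy
          obtain ⟨hy0, hyx, _⟩ := hwin y hy
          have h1 : ENNReal.ofReal (x ^ (-(2*lam))) * ENNReal.ofReal (h y) ≤
              ENNReal.ofReal (y ^ (-(2*lam)) * h y) := by
            rw [← ENNReal.ofReal_mul (le_of_lt (Real.rpow_pos_of_pos hx0 _))]
            apply ENNReal.ofReal_le_ofReal
            apply mul_le_mul_of_nonneg_right _ (hnn y hy0)
            exact Real.rpow_le_rpow_of_nonpos hy0 hyx (by linarith)
          calc (ENNReal.ofReal (x ^ (-(2*lam))) * (ENNReal.ofReal κ * P)) *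
                ENNReal.ofReal (h y)
              = (ENNReal.ofReal (x ^ (-(2*lam))) * ENNReal.ofReal (h y)) *
                  (ENNReal.ofReal κ * P) := by ring
            _ ≤ ENNReal.ofReal (y ^ (-(2*lam)) * h y) *
                  ∫⁻ z in Set.Ioi (x - y),
                    ENNReal.ofReal (K y z * z ^ (-(1+2*lam)) * h z) :=
                mul_le_mul' h1 (hinner y hy)
      _ ≤ _ := lintegral_mono_set hsub2
  -- combine
  rw [hx]
  have hscal : hl * k₀ / (x*x) = (hl * x ^ (2*lam-1)) * (x ^ (-(2*lam)) * κ) := by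
    rw [hκdef]
    have e3 : x ^ (-(2:ℝ)) = (x*x)⁻¹ := by
      have h2 : x ^ ((2:ℕ):ℝ) = x * x := by rw [Real.rpow_natCast, pow_two]
      rw [show (-(2:ℝ)) = -((2:ℕ):ℝ) by norm_num, Real.rpow_neg hx0.le, h2]
    have esum : (-(2:ℝ)) = (2*lam-1) + (-(2*lam) + ((2*lam) + -(1+2*lam))) := by ring
    have esplit : x ^ (-(2:ℝ))
        = x ^ (2*lam-1) * (x ^ (-(2*lam)) * (x ^ (2*lam) * x ^ (-(1+2*lam)))) := by
      rw [esum, Real.rpow_add hx0, Real.rpow_add hx0, Real.rpow_add hx0]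
    calc hl * k₀ / (x*x) = hl * k₀ * (x*x)⁻¹ := by ring
      _ = hl * k₀ * x ^ (-(2:ℝ)) := by rw [e3]
      _ = hl * k₀ * (x ^ (2*lam-1) * (x ^ (-(2*lam)) * (x ^ (2*lam) * x ^ (-(1+2*lam))))) := by
          rw [esplit]
      _ = (hl * x ^ (2*lam-1)) * (x ^ (-(2*lam)) * (k₀ * (x ^ (2*lam) * x ^ (-(1+2*lam))))) := by
          ring
  calc ENNReal.ofReal (hl * k₀ / (x*x)) * (P * P)
      = ENNReal.ofReal (hl * x ^ (2*lam-1)) *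
          (ENNReal.ofReal (x ^ (-(2*lam))) * (ENNReal.ofReal κ * (P * P))) := by
        rw [hscal, ENNReal.ofReal_mul (by positivity), ENNReal.ofReal_mul
          (le_of_lt (Real.rpow_pos_of_pos hx0 _))]
        ring
    _ ≤ ENNReal.ofReal (hl * x ^ (2*lam-1)) * _ := mul_le_mul_right houter _

lemma avg_bound_of_ptwise (h : ℝ → ℝ) (c₀ : ℝ) (hc₀ : 0 < c₀)
    (hpt : ∀ᵐ x ∂(volume.restrict (Set.Ioi (0:ℝ))),
      ENNReal.ofReal (c₀ / (x*x)) *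
        ((∫⁻ y in Set.Ioo (x/2) x, ENNReal.ofReal (h y)) *
         (∫⁻ y in Set.Ioo (x/2) x, ENNReal.ofReal (h y))) ≤ ENNReal.ofReal (h x)) :
    ∀ R > (0:ℝ), ∫⁻ x in Set.Ioo (R/2) R, ENNReal.ofReal (h x)
      ≤ ENNReal.ofReal ((80/c₀) * R / 2) := by
  -- Step 2a: any Ioo a b with 0 < a < b < 2a has finite integral
  have key : ∀ a b : ℝ, 0 < a → a < b → b < 2*a →
      (∫⁻ x in Set.Ioo a b, ENNReal.ofReal (h x)) ≠ ⊤ := by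
    intro a b ha hab hb2a
    by_contra htop
    -- the region (b, 2a) has positive measure
    have hne : volume.restrict (Set.Ioo b (2*a)) ≠ 0 := by
      simp only [ne_eq, Measure.restrict_eq_zero, Real.volume_Ioo]
      simp only [ne_eq, ENNReal.ofReal_eq_zero, not_le]
      linarith
    haveI : (ae (volume.restrict (Set.Ioo b (2*a)))).NeBot := ae_neBot.mpr hne
    have hsub : Set.Ioo b (2*a) ⊆ Set.Ioi (0:ℝ) := fun x hx => lt_trans (by linarith) hx.1
    have hpt' := ae_restrict_of_ae_restrict_of_subset hsub hpt
    obtain ⟨x, hx1, hx2⟩ := (hpt'.and (ae_restrict_mem measurableSet_Ioo)).exists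
    obtain ⟨hxb, hx2a⟩ := hx2
    have hx0 : 0 < x := lt_trans (by linarith) hxb
    have hsub2 : Set.Ioo a b ⊆ Set.Ioo (x/2) x := by
      intro z hz; exact ⟨by linarith [hz.1], lt_trans hz.2 hxb⟩
    have hPtop : (∫⁻ y in Set.Ioo (x/2) x, ENNReal.ofReal (h y)) = ⊤ :=
      top_le_iff.mp (htop ▸ lintegral_mono_set hsub2)
    rw [hPtop] at hx1
    have hcpos : ENNReal.ofReal (c₀ / (x*x)) ≠ 0 := by
      simp only [ne_eq, ENNReal.ofReal_eq_zero, not_le]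
      positivity
    rw [ENNReal.top_mul ENNReal.top_ne_zero, ENNReal.mul_top hcpos] at hx1
    exact ENNReal.ofReal_ne_top (top_le_iff.mp hx1)
  -- Step 2b: finiteness on dyadic intervals
  have hfin : ∀ R : ℝ, 0 < R → (∫⁻ x in Set.Ioo (R/2) R, ENNReal.ofReal (h x)) ≠ ⊤ := by
    intro R hR
    have hcover : Set.Ioo (R/2) R ⊆ Set.Ioc (R/2) (3*R/4) ∪ Set.Ioo (3*R/4) R := by
      intro x hx
      rcases le_or_gt x (3*R/4) with hc | hc
      · exact Or.inl ⟨hx.1, hc⟩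
      · exact Or.inr ⟨hc, hx.2⟩
    have hIoc : (∫⁻ x in Set.Ioc (R/2) (3*R/4), ENNReal.ofReal (h x))
        = ∫⁻ x in Set.Ioo (R/2) (3*R/4), ENNReal.ofReal (h x) :=
      (setLIntegral_congr Ioo_ae_eq_Ioc).symm
    have h1 : (∫⁻ x in Set.Ioo (R/2) (3*R/4), ENNReal.ofReal (h x)) ≠ ⊤ :=
      key (R/2) (3*R/4) (by linarith) (by linarith) (by linarith)
    have h2 : (∫⁻ x in Set.Ioo (3*R/4) R, ENNReal.ofReal (h x)) ≠ ⊤ :=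
      key (3*R/4) R (by linarith) (by linarith) (by linarith)
    have hle : (∫⁻ x in Set.Ioo (R/2) R, ENNReal.ofReal (h x))
        ≤ (∫⁻ x in Set.Ioc (R/2) (3*R/4), ENNReal.ofReal (h x))
          + ∫⁻ x in Set.Ioo (3*R/4) R, ENNReal.ofReal (h x) :=
      le_trans (lintegral_mono_set hcover) (lintegral_union_le _ _ _)
    rw [hIoc] at hle
    exact ne_top_of_le_ne_top (ENNReal.add_ne_top.mpr ⟨h1, h2⟩) hle
  -- Step 3: Riccati iteration
  have step3 : ∀ S : ℝ, 0 < S →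
      (∫⁻ x in Set.Ioo (S/2) (3*S/4), ENNReal.ofReal (h x))
        ≤ ENNReal.ofReal (16/c₀ * S) := by
    intro S hS
    by_contra hgt
    push_neg at hgt
    set T : ℝ≥0∞ := ∫⁻ x in Set.Ioo (S/2) S, ENNReal.ofReal (h x) with hT
    have hTfin : T ≠ ⊤ := hfin S hS
    set t : ℕ → ℝ := fun i => S - S / 2^(i+2) with ht
    have htlt : ∀ i, t i < S := by
      intro i; rw [ht]; simp only
      have : (0:ℝ) < S / 2^(i+2) := by positivity
      linarith
    have htge : ∀ i, 3*S/4 ≤ t i := by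
      intro i; rw [ht]; simp only
      have h1 : S / 2^(i+2) ≤ S / 2^2 := by
        apply div_le_div_of_nonneg_left hS.le (by positivity)
        exact pow_le_pow_right₀ one_le_two (by omega)
      nlinarith
    have htmono : ∀ i, t i < t (i+1) := by
      intro i; rw [ht]; simp only
      have : S / 2^(i+1+2) < S / 2^(i+2) := by
        apply div_lt_div_of_pos_left hS (by positivity)
        exact pow_lt_pow_right₀ one_lt_two (by omega)
      linarith
    set u : ℕ → ℝ≥0∞ := fun i => ∫⁻ x in Set.Ioo (S/2) (t i), ENNReal.ofReal (h x) with hu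
    have huT : ∀ i, u i ≤ T := by
      intro i
      apply lintegral_mono_set
      intro x hx; exact ⟨hx.1, lt_trans hx.2 (htlt i)⟩
    -- recursion
    have hrec : ∀ i, ENNReal.ofReal (c₀/(S*S) * (S/2^(i+3))) * (u i * u i) ≤ u (i+1) := by
      intro i
      have hsubI : Set.Ioo (t i) (t (i+1)) ⊆ Set.Ioo (S/2) (t (i+1)) := by
        intro x hx
        refine ⟨lt_of_le_of_lt (le_trans ?_ (htge i)) hx.1, hx.2⟩
        linarith
      have hsub0 : Set.Ioo (t i) (t (i+1)) ⊆ Set.Ioi (0:ℝ) := by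
        intro x hx
        have : (0:ℝ) < t i := lt_of_lt_of_le (by linarith : (0:ℝ) < 3*S/4) (htge i)
        exact lt_trans this hx.1
      have hpt' := ae_restrict_of_ae_restrict_of_subset hsub0 hpt
      have haebound : ∀ᵐ x ∂(volume.restrict (Set.Ioo (t i) (t (i+1)))),
          ENNReal.ofReal (c₀/(S*S)) * (u i * u i) ≤ ENNReal.ofReal (h x) := by
        filter_upwards [hpt', ae_restrict_mem measurableSet_Ioo] with x hx1 hx2
        have hx0 : 0 < x := lt_of_le_of_lt (le_trans (by linarith : (0:ℝ) ≤ 3*S/4) (htge i)) hx2.1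
        have hxS : x ≤ S := le_of_lt (lt_trans hx2.2 (htlt (i+1)))
        have hwind : Set.Ioo (S/2) (t i) ⊆ Set.Ioo (x/2) x := by
          intro z hz
          exact ⟨lt_of_le_of_lt (by linarith : x/2 ≤ S/2) hz.1, lt_trans hz.2 hx2.1⟩
        have hP : u i ≤ ∫⁻ y in Set.Ioo (x/2) x, ENNReal.ofReal (h y) :=
          lintegral_mono_set hwind
        have hc : ENNReal.ofReal (c₀/(S*S)) ≤ ENNReal.ofReal (c₀/(x*x)) := by
          apply ENNReal.ofReal_le_ofReal
          apply div_le_div_of_nonneg_left hc₀.le (by positivity)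
          nlinarith
        calc ENNReal.ofReal (c₀/(S*S)) * (u i * u i)
            ≤ ENNReal.ofReal (c₀/(x*x)) *
                ((∫⁻ y in Set.Ioo (x/2) x, ENNReal.ofReal (h y)) *
                 (∫⁻ y in Set.Ioo (x/2) x, ENNReal.ofReal (h y))) :=
              mul_le_mul' hc (mul_le_mul' hP hP)
          _ ≤ ENNReal.ofReal (h x) := hx1
      calc ENNReal.ofReal (c₀/(S*S) * (S/2^(i+3))) * (u i * u i)
          = (ENNReal.ofReal (c₀/(S*S)) * (u i * u i)) * ENNReal.ofReal (S/2^(i+3)) := by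
            rw [ENNReal.ofReal_mul (by positivity)]; ring
        _ = (ENNReal.ofReal (c₀/(S*S)) * (u i * u i)) * volume (Set.Ioo (t i) (t (i+1))) := by
            rw [Real.volume_Ioo, show t (i+1) - t i = S/2^(i+3) by
              rw [ht]; simp only; field_simp; ring]
        _ = ∫⁻ _x in Set.Ioo (t i) (t (i+1)), ENNReal.ofReal (c₀/(S*S)) * (u i * u i) := by
            rw [setLIntegral_const]
        _ ≤ ∫⁻ x in Set.Ioo (t i) (t (i+1)), ENNReal.ofReal (h x) :=
            lintegral_mono_ae haebound
        _ ≤ u (i+1) := lintegral_mono_set hsubI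
    -- induction: u i ≥ 16/c₀ * S * 2^i
    have hind : ∀ i : ℕ, ENNReal.ofReal (16/c₀ * S * 2^i) ≤ u i := by
      intro i
      induction i with
      | zero =>
        have ht0 : t 0 = 3*S/4 := by
          rw [ht]; norm_num; ring
        rw [hu]; simp only [ht0, pow_zero, mul_one]
        exact hgt.le
      | succ i ih =>
        have heqr : (16/c₀ * S * 2^(i+1) : ℝ)
            = c₀/(S*S) * (S/2^(i+3)) * ((16/c₀ * S * 2^i) * (16/c₀ * S * 2^i)) := by
          field_simp
          ring
        calc ENNReal.ofReal (16/c₀ * S * 2^(i+1))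
            = ENNReal.ofReal (c₀/(S*S) * (S/2^(i+3))) *
                (ENNReal.ofReal (16/c₀ * S * 2^i) * ENNReal.ofReal (16/c₀ * S * 2^i)) := by
              rw [← ENNReal.ofReal_mul (by positivity), ← ENNReal.ofReal_mul (by positivity),
                heqr]
          _ ≤ ENNReal.ofReal (c₀/(S*S) * (S/2^(i+3))) * (u i * u i) :=
              mul_le_mul_right (mul_le_mul' ih ih) _
          _ ≤ u (i+1) := hrec i
    -- contradiction
    obtain ⟨n, hn⟩ := pow_unbounded_of_one_lt (T.toReal / (16/c₀ * S)) (one_lt_two (α := ℝ))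
    have hpos : (0:ℝ) < 16/c₀ * S := by positivity
    have hTlt : T < ENNReal.ofReal (16/c₀ * S * 2^n) := by
      rw [ENNReal.lt_ofReal_iff_toReal_lt hTfin]
      rw [div_lt_iff₀ hpos] at hn
      linarith
    exact absurd (le_trans (hind n) (huT n)) (not_le.mpr hTlt)
  -- Step 4: combine
  intro R hR
  have hcover : Set.Ioo (R/2) R ⊆ Set.Ioc (R/2) (3*R/4) ∪ Set.Ioo (3*R/4) (9*R/8) := by
    intro x hx
    rcases le_or_gt x (3*R/4) with hc | hc
    · exact Or.inl ⟨hx.1, hc⟩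
    · exact Or.inr ⟨hc, by linarith [hx.2]⟩
  have hIoc : (∫⁻ x in Set.Ioc (R/2) (3*R/4), ENNReal.ofReal (h x))
      = ∫⁻ x in Set.Ioo (R/2) (3*R/4), ENNReal.ofReal (h x) :=
    (setLIntegral_congr Ioo_ae_eq_Ioc).symm
  have h1 : (∫⁻ x in Set.Ioo (R/2) (3*R/4), ENNReal.ofReal (h x))
      ≤ ENNReal.ofReal (16/c₀ * R) := step3 R hR
  have h2 : (∫⁻ x in Set.Ioo (3*R/4) (9*R/8), ENNReal.ofReal (h x))
      ≤ ENNReal.ofReal (16/c₀ * (3*R/2)) := by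
    have := step3 (3*R/2) (by linarith)
    have e1 : (3*R/2)/2 = 3*R/4 := by ring
    have e2 : 3*(3*R/2)/4 = 9*R/8 := by ring
    rwa [e1, e2] at this
  calc (∫⁻ x in Set.Ioo (R/2) R, ENNReal.ofReal (h x))
      ≤ (∫⁻ x in Set.Ioc (R/2) (3*R/4), ENNReal.ofReal (h x))
        + ∫⁻ x in Set.Ioo (3*R/4) (9*R/8), ENNReal.ofReal (h x) :=
        le_trans (lintegral_mono_set hcover) (lintegral_union_le _ _ _)
    _ ≤ ENNReal.ofReal (16/c₀ * R) + ENNReal.ofReal (16/c₀ * (3*R/2)) := by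
        rw [hIoc]; exact add_le_add h1 h2
    _ = ENNReal.ofReal (16/c₀ * R + 16/c₀ * (3*R/2)) := by
        rw [← ENNReal.ofReal_add (by positivity) (by positivity)]
    _ = ENNReal.ofReal ((80/c₀) * R / 2) := by
        congr 1; field_simp; ring

/-- uniform bound on dyadic averages of a solution `h` of the weak equation. -/
theorem average_bound
    (K : ℝ → ℝ → ℝ) (K₀ k₀ α β lam hl : ℝ)
    (hK₀ : 0 < K₀) (hk₀ : 0 < k₀)
    (hα : 0 < α) (hαβ : α ≤ β) (hβ : β < 1/2)
    (hsum : α + β = 2*lam)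
    (hC1 : ContDiffOn ℝ 1 (Function.uncurry K) (Set.Ioi (0:ℝ) ×ˢ Set.Ioi (0:ℝ)))
    (hsymm : ∀ x y : ℝ, K x y = K y x)
    (hhom : ∀ a x y : ℝ, 0 < a → 0 < x → 0 < y → K (a*x) (a*y) = a ^ (2*lam) * K x y)
    (hnonneg : ∀ x y : ℝ, 0 < x → 0 < y → 0 ≤ K x y)
    (hup : ∀ x y : ℝ, 0 < x → 0 < y → K x y ≤ K₀ * (x ^ α * y ^ β + x ^ β * y ^ α))
    (hlow : ∀ x y : ℝ, x ∈ Set.Icc (1/4 : ℝ) 1 → y ∈ Set.Icc (1/4 : ℝ) 1 → k₀ ≤ K x y)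
    (hlpos : 0 < hl)
    (hldef : hl = (∫ s in Set.Ioo (0:ℝ) 1,
        s ^ (-(2*lam)) * ∫ t in Set.Ioi (1-s), K s t * t ^ (-(1+2*lam)))⁻¹)
    (h : ℝ → ℝ) (hmeas : Measurable h) (hnn : ∀ x > (0:ℝ), 0 ≤ h x)
    (heq : ∀ᵐ x ∂(volume.restrict (Set.Ioi (0:ℝ))),
      ENNReal.ofReal (h x)
        = ENNReal.ofReal (hl * x ^ (2*lam - 1))
          * ∫⁻ y in Set.Ioo (0:ℝ) x,
              ENNReal.ofReal (y ^ (-(2*lam)) * h y)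
              * ∫⁻ z in Set.Ioi (x - y),
                  ENNReal.ofReal (K y z * z ^ (-(1+2*lam)) * h z)) :
    ∃ C > (0:ℝ), ∀ R > (0:ℝ),
      ∫⁻ x in Set.Ioo (R/2) R, ENNReal.ofReal (h x) ≤ ENNReal.ofReal (C * R / 2) := by
  have hlam : 0 < lam := by linarith
  refine ⟨80/(hl*k₀), by positivity, ?_⟩
  exact avg_bound_of_ptwise h (hl*k₀) (by positivity)
    (ptwise_bound K k₀ lam hl hk₀ hlam hhom hlow hlpos h hmeas hnn heq)
end

section
/- Let h: (0,∞) → [0,∞) be measurable with sup_{R>0} (2/R)∫_{R/2}^R h ≤ C₀. If α > 2λ - 1 (in particular if 0 < α and 2λ < 1), then for every x > 0, ∫₀^x y^{-2λ+α} h(y) dy ≤ C x^{1-2λ+α} for a constant C depending only on C₀, λ, α. -/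
open MeasureTheory Real Set

/-- near-zero integral estimate from bounded dyadic averages. -/
theorem near_zero_integral_estimate
    (lam α C₀ : ℝ) (hlam : lam ∈ Set.Ioo (0:ℝ) (1/2))
    (hα : 0 < α) (hC₀ : 0 < C₀)
    (h : ℝ → ℝ) (hmeas : Measurable h) (hnn : ∀ x > (0:ℝ), 0 ≤ h x)
    (hav : ∀ R > (0:ℝ),
      ∫⁻ x in Set.Ioo (R/2) R, ENNReal.ofReal (h x) ≤ ENNReal.ofReal (C₀ * R / 2)) :
    ∃ C > (0:ℝ), ∀ x > (0:ℝ),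
      ∫⁻ y in Set.Ioo (0:ℝ) x, ENNReal.ofReal (y ^ (-(2*lam) + α) * h y)
        ≤ ENNReal.ofReal (C * x ^ (1 - 2*lam + α)) := by
  obtain ⟨hlam0, hlam1⟩ := hlam
  set β : ℝ := -(2*lam) + α with hβdef
  have hβ1 : 0 < 1 + β := by
    have : 2 * lam < 1 := by linarith
    simp only [hβdef]; linarith
  set r : ℝ := (1/2 : ℝ) ^ (1+β) with hrdef
  have hr0 : 0 < r := Real.rpow_pos_of_pos (by norm_num) _
  have hr1 : r < 1 := Real.rpow_lt_one (by norm_num) (by norm_num) hβ1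
  set K : ℝ := max 1 ((2:ℝ) ^ (-β)) with hKdef
  have hK1 : (1:ℝ) ≤ K := le_max_left _ _
  have hK0 : 0 < K := lt_of_lt_of_le one_pos hK1
  have hrr : 0 < 1 - r := by linarith
  refine ⟨K * C₀ / 2 * (1 - r)⁻¹, by positivity, ?_⟩
  intro x hx
  have hexp : 1 - 2*lam + α = 1 + β := by simp only [hβdef]; ring
  -- covering
  have hcover : Ioo (0:ℝ) x ⊆ ⋃ k : ℕ, Ioc (x / 2^(k+1)) (x / 2^k) := by
    intro y hy
    obtain ⟨hy0, hyx⟩ := hy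
    have hex : ∃ k : ℕ, x / 2^(k+1) < y := by
      obtain ⟨k, hk⟩ := pow_unbounded_of_one_lt (x / y) (one_lt_two (α := ℝ))
      refine ⟨k, ?_⟩
      have h2 : (0:ℝ) < 2 ^ (k+1) := by positivity
      rw [div_lt_iff₀ h2]
      rw [div_lt_iff₀ hy0] at hk
      have : (2:ℝ) ^ k ≤ 2 ^ (k+1) := by
        apply pow_le_pow_right₀ (by norm_num) (Nat.le_succ k)
      nlinarith
    classical
    let k := Nat.find hex
    have hk1 : x / 2^(k+1) < y := Nat.find_spec hex
    have hk2 : y ≤ x / 2^k := by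
      rcases Nat.eq_zero_or_pos k with hk0 | hkpos
      · rw [hk0]; simpa using hyx.le
      · have := Nat.find_min hex (m := k - 1) (by omega)
        push_neg at this
        have hkk : k - 1 + 1 = k := by omega
        rwa [hkk] at this
    exact mem_iUnion.2 ⟨k, hk1, hk2⟩
  -- bound on each piece
  have hbound : ∀ k : ℕ,
      ∫⁻ y in Ioc (x / 2^(k+1)) (x / 2^k), ENNReal.ofReal (y ^ β * h y)
        ≤ ENNReal.ofReal (K * C₀ / 2 * x ^ (1+β) * r ^ k) := by
    intro k
    set R : ℝ := x / 2^k with hRdef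
    have hR0 : 0 < R := by positivity
    have hhalf : x / 2^(k+1) = R / 2 := by
      rw [hRdef, div_div, ← pow_succ]
    -- pointwise bound on (R/2, R]
    have hpt : ∀ y ∈ Ioc (R/2) R, y ^ β * h y ≤ K * R ^ β * h y := by
      intro y ⟨hy1, hy2⟩
      have hy0 : 0 < y := lt_trans (by positivity) hy1
      have hhy : 0 ≤ h y := hnn y hy0
      have hyb : y ^ β ≤ K * R ^ β := by
        rcases le_or_gt 0 β with hb | hb
        · calc y ^ β ≤ R ^ β := Real.rpow_le_rpow hy0.le hy2 hb
            _ ≤ K * R ^ β := le_mul_of_one_le_left (Real.rpow_nonneg hR0.le _) hK1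
        · have h1 : y ^ β ≤ (R/2) ^ β :=
            Real.rpow_le_rpow_of_nonpos (by positivity) hy1.le hb.le
          have h2 : (R/2) ^ β = 2 ^ (-β) * R ^ β := by
            rw [div_eq_mul_inv, Real.mul_rpow hR0.le (by norm_num),
              Real.inv_rpow (by norm_num), ← Real.rpow_neg (by norm_num), mul_comm]
          have h3 : (2:ℝ) ^ (-β) ≤ K := le_max_right _ _
          calc y ^ β ≤ 2 ^ (-β) * R ^ β := h2 ▸ h1
            _ ≤ K * R ^ β := by
                apply mul_le_mul_of_nonneg_right h3 (Real.rpow_nonneg hR0.le _)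
      exact mul_le_mul_of_nonneg_right hyb hhy
    have hKR : (0:ℝ) ≤ K * R ^ β := by positivity
    rw [hhalf]
    calc ∫⁻ y in Ioc (R/2) R, ENNReal.ofReal (y ^ β * h y)
        ≤ ∫⁻ y in Ioc (R/2) R, ENNReal.ofReal (K * R ^ β) * ENNReal.ofReal (h y) := by
          apply setLIntegral_mono (by fun_prop)
          intro y hy
          rw [← ENNReal.ofReal_mul hKR]
          exact ENNReal.ofReal_le_ofReal (hpt y hy)
      _ = ENNReal.ofReal (K * R ^ β) * ∫⁻ y in Ioc (R/2) R, ENNReal.ofReal (h y) := by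
          rw [lintegral_const_mul _ (by fun_prop)]
      _ = ENNReal.ofReal (K * R ^ β) * ∫⁻ y in Ioo (R/2) R, ENNReal.ofReal (h y) := by
          rw [Measure.restrict_congr_set Ioo_ae_eq_Ioc.symm]
      _ ≤ ENNReal.ofReal (K * R ^ β) * ENNReal.ofReal (C₀ * R / 2) := by
          exact mul_le_mul_right (hav R hR0) _
      _ = ENNReal.ofReal (K * R ^ β * (C₀ * R / 2)) := by
          rw [← ENNReal.ofReal_mul hKR]
      _ = ENNReal.ofReal (K * C₀ / 2 * x ^ (1+β) * r ^ k) := by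
          congr 1
          have hRpow : R ^ β * R = x ^ (1+β) * r ^ k := by
            have e1 : R ^ β * R = R ^ (1+β) := by
              rw [show (1:ℝ)+β = β+1 by ring, Real.rpow_add_one hR0.ne']
            have e2 : R = x * (1/2 : ℝ) ^ (k : ℕ) := by
              rw [hRdef]; field_simp; rw [← mul_pow]; norm_num
            have e3 : ((1/2:ℝ)^(k:ℕ)) ^ (1+β) = r ^ k := by
              rw [hrdef, ← Real.rpow_natCast ((1/2:ℝ)) k,
                ← Real.rpow_mul (by norm_num : (0:ℝ) ≤ 1/2), mul_comm,
                Real.rpow_mul (by norm_num : (0:ℝ) ≤ 1/2), Real.rpow_natCast]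
            rw [e1, e2, Real.mul_rpow hx.le (by positivity), e3]
          calc K * R ^ β * (C₀ * R / 2) = K * C₀ / 2 * (R ^ β * R) := by ring
            _ = K * C₀ / 2 * (x ^ (1+β) * r ^ k) := by rw [hRpow]
            _ = K * C₀ / 2 * x ^ (1+β) * r ^ k := by ring
  -- summability of the geometric bound
  have hsum : Summable (fun k : ℕ => K * C₀ / 2 * x ^ (1+β) * r ^ k) :=
    (summable_geometric_of_lt_one hr0.le hr1).mul_left _
  calc ∫⁻ y in Ioo (0:ℝ) x, ENNReal.ofReal (y ^ (-(2*lam) + α) * h y)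
      ≤ ∫⁻ y in ⋃ k : ℕ, Ioc (x / 2^(k+1)) (x / 2^k),
          ENNReal.ofReal (y ^ β * h y) := lintegral_mono_set hcover
    _ ≤ ∑' k : ℕ, ∫⁻ y in Ioc (x / 2^(k+1)) (x / 2^k),
          ENNReal.ofReal (y ^ β * h y) := lintegral_iUnion_le _ _
    _ ≤ ∑' k : ℕ, ENNReal.ofReal (K * C₀ / 2 * x ^ (1+β) * r ^ k) :=
        ENNReal.tsum_le_tsum hbound
    _ = ENNReal.ofReal (∑' k : ℕ, K * C₀ / 2 * x ^ (1+β) * r ^ k) :=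
        (ENNReal.ofReal_tsum_of_nonneg (fun k => by positivity) hsum).symm
    _ = ENNReal.ofReal (K * C₀ / 2 * (1 - r)⁻¹ * x ^ (1 - 2*lam + α)) := by
        rw [tsum_mul_left, tsum_geometric_of_lt_one hr0.le hr1, hexp]
        congr 1
        ring
end

section
/- Let h: (0,∞) → [0,∞) be measurable with sup_{R>0} (2/R)∫_{R/2}^R h ≤ C₀, and let 0 < β < 2λ < 1. Then for all 0 < y < x, ∫_{x-y}^x z^{-(1+2λ)+β} h(z) dz ≤ C ((x-y)^{-2λ+β} + x^{-2λ+β}) for a constant C depending only on C₀, λ, β. -/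
open MeasureTheory Real Set

/-- estimate for the integral over `(x-y, x)` from bounded dyadic averages. -/
theorem middle_integral_estimate
    (lam β C₀ : ℝ) (hlam : lam ∈ Set.Ioo (0:ℝ) (1/2))
    (hβ : 0 < β) (hβlam : β < 2*lam) (hC₀ : 0 < C₀)
    (h : ℝ → ℝ) (hmeas : Measurable h) (hnn : ∀ x > (0:ℝ), 0 ≤ h x)
    (hav : ∀ R > (0:ℝ),
      ∫⁻ x in Set.Ioo (R/2) R, ENNReal.ofReal (h x) ≤ ENNReal.ofReal (C₀ * R / 2)) :
    ∃ C > (0:ℝ), ∀ x y : ℝ, 0 < y → y < x →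
      ∫⁻ z in Set.Ioo (x - y) x, ENNReal.ofReal (z ^ (-(1+2*lam) + β) * h z)
        ≤ ENNReal.ofReal (C * ((x - y) ^ (-(2*lam) + β) + x ^ (-(2*lam) + β))) := by
  obtain ⟨hlam0, hlam2⟩ := hlam
  set p : ℝ := -(1+2*lam) + β with hp
  set e : ℝ := -(2*lam) + β with he
  have hep : e = p + 1 := by rw [hp, he]; ring
  have he0 : e < 0 := by rw [he]; linarith
  have hp0 : p < 0 := by rw [hp]; linarith
  set ρ : ℝ := (2:ℝ) ^ e with hρ
  have hρ0 : 0 < ρ := rpow_pos_of_pos two_pos e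
  have hρ1 : ρ < 1 := rpow_lt_one_of_one_lt_of_neg (by norm_num) he0
  have hinv : 0 < (1 - ρ)⁻¹ := inv_pos.2 (by linarith)
  refine ⟨C₀ * (1 - ρ)⁻¹ + 1, by nlinarith [mul_pos hC₀ hinv], ?_⟩
  intro x y hy hyx
  set a := x - y with ha
  have ha0 : 0 < a := by simp only [ha]; linarith
  have hx0 : 0 < x := by linarith
  have hae : 0 < a ^ e := rpow_pos_of_pos ha0 e
  have hxe : 0 < x ^ e := rpow_pos_of_pos hx0 e
  have hsub : Ioo a x ⊆ ⋃ k : ℕ, Ico ((2:ℝ)^k * a) ((2:ℝ)^(k+1) * a) := by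
    intro z hz
    have hz1 : a < z := hz.1
    obtain ⟨n, hn1, hn2⟩ := exists_nat_pow_near
      (le_of_lt ((one_lt_div ha0).2 hz1)) (by norm_num : (1:ℝ) < 2)
    exact mem_iUnion.2 ⟨n, (le_div_iff₀ ha0).1 hn1, (div_lt_iff₀ ha0).1 hn2⟩
  -- bound on each dyadic piece
  have hterm : ∀ k : ℕ,
      ∫⁻ z in Ico ((2:ℝ)^k * a) ((2:ℝ)^(k+1) * a), ENNReal.ofReal (z ^ p * h z)
        ≤ ENNReal.ofReal (C₀ * a ^ e) * (ENNReal.ofReal ρ) ^ k := by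
    intro k
    set b : ℝ := (2:ℝ)^k * a with hb
    have hb0 : 0 < b := by positivity
    have hbp : 0 ≤ b ^ p := (rpow_pos_of_pos hb0 p).le
    have h2b : (2:ℝ)^(k+1) * a = 2 * b := by rw [hb]; ring
    have hcong : ∫⁻ z in Ico b (2*b), ENNReal.ofReal (z ^ p * h z)
        = ∫⁻ z in Ioo b (2*b), ENNReal.ofReal (z ^ p * h z) :=
      (setLIntegral_congr (Ioo_ae_eq_Ico (μ := volume) (a := b) (b := 2*b))).symm
    rw [h2b, hcong]
    have hmono : ∫⁻ z in Ioo b (2*b), ENNReal.ofReal (z ^ p * h z)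
        ≤ ∫⁻ z in Ioo b (2*b), ENNReal.ofReal (b ^ p) * ENNReal.ofReal (h z) := by
      refine setLIntegral_mono (by fun_prop) ?_
      intro z hz
      have hz0 : 0 < z := lt_trans hb0 hz.1
      rw [← ENNReal.ofReal_mul hbp]
      exact ENNReal.ofReal_le_ofReal
        (mul_le_mul_of_nonneg_right (rpow_le_rpow_of_nonpos hb0 hz.1.le hp0.le) (hnn z hz0))
    have hconst : ∫⁻ z in Ioo b (2*b), ENNReal.ofReal (b ^ p) * ENNReal.ofReal (h z)
        = ENNReal.ofReal (b ^ p) * ∫⁻ z in Ioo b (2*b), ENNReal.ofReal (h z) :=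
      lintegral_const_mul _ (by fun_prop)
    have havb := hav (2*b) (by positivity)
    rw [show (2*b)/2 = b by ring] at havb
    calc ∫⁻ z in Ioo b (2*b), ENNReal.ofReal (z ^ p * h z)
        ≤ ENNReal.ofReal (b ^ p) * ∫⁻ z in Ioo b (2*b), ENNReal.ofReal (h z) := by
          rw [← hconst]; exact hmono
      _ ≤ ENNReal.ofReal (b ^ p) * ENNReal.ofReal (C₀ * (2*b) / 2) :=
          mul_le_mul_right havb _
      _ = ENNReal.ofReal (C₀ * a ^ e) * (ENNReal.ofReal ρ) ^ k := by
          rw [← ENNReal.ofReal_mul hbp, ← ENNReal.ofReal_pow hρ0.le,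
            ← ENNReal.ofReal_mul (by positivity)]
          congr 1
          have hbe : b ^ e = ρ ^ k * a ^ e := by
            rw [hb, mul_rpow (by positivity) ha0.le, hρ,
              ← rpow_natCast (2:ℝ) k, ← rpow_natCast ((2:ℝ) ^ e) k,
              ← rpow_mul (by norm_num : (0:ℝ) ≤ 2), ← rpow_mul (by norm_num : (0:ℝ) ≤ 2),
              mul_comm (k:ℝ) e]
          have : b ^ p * (C₀ * (2*b) / 2) = C₀ * b ^ e := by
            rw [hep, rpow_add_one hb0.ne']; ring
          rw [this, hbe]; ring
  calc ∫⁻ z in Ioo a x, ENNReal.ofReal (z ^ p * h z)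
      ≤ ∫⁻ z in ⋃ k : ℕ, Ico ((2:ℝ)^k * a) ((2:ℝ)^(k+1) * a),
          ENNReal.ofReal (z ^ p * h z) := lintegral_mono_set hsub
    _ ≤ ∑' k : ℕ, ∫⁻ z in Ico ((2:ℝ)^k * a) ((2:ℝ)^(k+1) * a),
          ENNReal.ofReal (z ^ p * h z) := lintegral_iUnion_le _ _
    _ ≤ ∑' k : ℕ, ENNReal.ofReal (C₀ * a ^ e) * (ENNReal.ofReal ρ) ^ k :=
        ENNReal.tsum_le_tsum hterm
    _ = ENNReal.ofReal (C₀ * a ^ e) * (1 - ENNReal.ofReal ρ)⁻¹ := by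
        rw [ENNReal.tsum_mul_left, ENNReal.tsum_geometric]
    _ = ENNReal.ofReal (C₀ * a ^ e * (1 - ρ)⁻¹) := by
        rw [← ENNReal.ofReal_one, ← ENNReal.ofReal_sub _ hρ0.le,
          ← ENNReal.ofReal_inv_of_pos (by linarith), ← ENNReal.ofReal_mul (by positivity)]
    _ ≤ ENNReal.ofReal ((C₀ * (1 - ρ)⁻¹ + 1) * (a ^ e + x ^ e)) := by
        apply ENNReal.ofReal_le_ofReal
        nlinarith [mul_pos hC₀ hinv]
end

section
/- Let H: ℝ → [0,∞) be bounded by M and satisfy H(X) = ∫_{Ω_X} G(Y-X, Z-X) H(Y) H(Z) dY dZ for all X, where G satisfies the stated bounds. Then there exists D = D(λ, α, k₀, K₀, M) > 0 such that for every X₀ ∈ ℝ and every X > X₀, H(X) ≤ 2 H(X₀) e^{D(X - X₀)}. -/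
open MeasureTheory Real Set

/-- Integral of a decaying exponential over `Ioi c`. -/
lemma growth_aux_lint_exp (a : ℝ) {γ : ℝ} (hγ : 0 < γ) (c : ℝ) :
    ∫⁻ z in Ioi c, ENNReal.ofReal (Real.exp (a - γ*z))
      = ENNReal.ofReal (Real.exp (a - γ*c)/γ) := by
  have hder : ∀ z ∈ Ici c, HasDerivAt (fun z => -Real.exp (a - γ*z)/γ)
      (Real.exp (a - γ*z)) z := by
    intro z _
    have h1 : HasDerivAt (fun z : ℝ => a - γ*z) (-γ) z := by
      have h := ((hasDerivAt_id z).const_mul γ).const_sub a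
      simp only [id_eq, mul_one] at h
      exact h
    have := (h1.exp.neg).div_const γ
    refine this.congr_deriv ?_
    rw [mul_neg, neg_neg, mul_div_assoc, div_self hγ.ne', mul_one]
  have hint : IntegrableOn (fun z => Real.exp (a - γ*z)) (Ioi c) := by
    have h5 := (exp_neg_integrableOn_Ioi c hγ).const_mul (Real.exp a)
    apply IntegrableOn.congr_fun h5 _ measurableSet_Ioi
    intro z _
    simp only [← Real.exp_add]
    congr 1
    ring
  have htend : Filter.Tendsto (fun z => -Real.exp (a - γ*z)/γ) Filter.atTop (nhds 0) := by
    have h2 : Filter.Tendsto (fun z : ℝ => a - γ*z) Filter.atTop Filter.atBot := by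
      apply Filter.tendsto_atBot_add_const_left
      simpa [neg_mul] using
        (Filter.tendsto_id (α := ℝ)).const_mul_atTop_of_neg (by linarith : -γ < 0)
    have h3 := (Real.tendsto_exp_atBot.comp h2).neg.div_const γ
    simpa using h3
  have hval := integral_Ioi_of_hasDerivAt_of_tendsto' hder hint htend
  have hnn : 0 ≤ᵐ[volume.restrict (Ioi c)] fun z => Real.exp (a - γ*z) := by
    filter_upwards with z using (Real.exp_pos _).le
  rw [← ofReal_integral_eq_lintegral_ofReal hint hnn, hval]
  congr 1
  ring

/-- Integral of an inverse square root over `Ioc 0 b`. -/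
lemma growth_aux_lint_rpow {b : ℝ} (hb : 0 < b) :
    ∫⁻ s in Ioc 0 b, ENNReal.ofReal (s ^ (-(2⁻¹:ℝ)))
      = ENNReal.ofReal (2 * b ^ ((2⁻¹:ℝ))) := by
  have hii : IntervalIntegrable (fun s : ℝ => s ^ (-(2⁻¹:ℝ))) volume 0 b :=
    intervalIntegral.intervalIntegrable_rpow' (by norm_num)
  have hint : IntegrableOn (fun s : ℝ => s ^ (-(2⁻¹:ℝ))) (Ioc 0 b) :=
    (intervalIntegrable_iff_integrableOn_Ioc_of_le hb.le).1 hii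
  have hnn : 0 ≤ᵐ[volume.restrict (Ioc 0 b)] fun s : ℝ => s ^ (-(2⁻¹:ℝ)) := by
    filter_upwards [ae_restrict_mem measurableSet_Ioc] with s hs
    exact Real.rpow_nonneg hs.1.le _
  rw [← ofReal_integral_eq_lintegral_ofReal hint hnn]
  congr 1
  rw [← intervalIntegral.integral_of_le hb.le,
    integral_rpow (Or.inl (by norm_num)),
    Real.zero_rpow (by norm_num)]
  norm_num
  ring

/-- Reflection change of variables for lower integrals. -/
lemma growth_aux_lint_reflect (x : ℝ) (f : ℝ → ENNReal) (s : Set ℝ) :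
    ∫⁻ y in (fun y => x - y)⁻¹' s, f (x - y) = ∫⁻ z in s, f z :=
  (Measure.measurePreserving_sub_left volume x).setLIntegral_comp_preimage_emb
    (Homeomorph.subLeft x).measurableEmbedding f s

/-- Elementary bound `1 - exp (-s) ≥ s/2` on `[0,1]`. -/
lemma growth_aux_one_sub_exp {s : ℝ} (h0 : 0 ≤ s) (h1 : s ≤ 1) :
    s/2 ≤ 1 - Real.exp (-s) := by
  have h2 : Real.exp (-s) ≤ 1/(1+s) := by
    rw [Real.exp_neg]
    have h3 : s + 1 ≤ Real.exp s := Real.add_one_le_exp s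
    have h4 : (0:ℝ) < 1 + s := by linarith
    rw [inv_le_comm₀ (Real.exp_pos s) (by positivity), inv_div, div_one]
    linarith
  have h4 : (0:ℝ) < 1 + s := by linarith
  have h5 : 1/(1+s) ≤ 1 - s/2 := by
    rw [div_le_iff₀ h4]
    nlinarith
  linarith

lemma growth_aux_half (r : ℝ) (hr : 0 < r) (hr1 : r ≤ 1) (t : ℝ) (hrt : r/2 ≤ t) (ht1 : t ≤ 1) :
    t ^ (-(2⁻¹:ℝ)) ≤ 2 * r ^ (-(2⁻¹:ℝ)) := by
  have ht0 : 0 < t := by linarith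
  have h1 : t ^ (-(2⁻¹:ℝ)) = (t ^ ((2⁻¹:ℝ)))⁻¹ := by
    rw [Real.rpow_neg ht0.le]
  have h7 : r ^ (-(2⁻¹:ℝ)) = (r ^ ((2⁻¹:ℝ)))⁻¹ := by
    rw [Real.rpow_neg hr.le]
  have h2 : (r/2) ^ ((2⁻¹:ℝ)) ≤ t ^ ((2⁻¹:ℝ)) :=
    Real.rpow_le_rpow (by positivity) hrt (by norm_num)
  have h3 : (t ^ ((2⁻¹:ℝ)))⁻¹ ≤ ((r/2) ^ ((2⁻¹:ℝ)))⁻¹ :=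
    inv_anti₀ (by positivity) h2
  have h4 : (r/2) ^ ((2⁻¹:ℝ)) = r ^ ((2⁻¹:ℝ)) / 2 ^ ((2⁻¹:ℝ)) :=
    Real.div_rpow hr.le (by norm_num : (0:ℝ) ≤ 2) _
  have hrp : (0:ℝ) < r ^ ((2⁻¹:ℝ)) := Real.rpow_pos_of_pos hr _
  have h2p : (0:ℝ) < 2 ^ ((2⁻¹:ℝ)) := Real.rpow_pos_of_pos (by norm_num) _
  have h5 : ((r/2) ^ ((2⁻¹:ℝ)))⁻¹ = 2 ^ ((2⁻¹:ℝ)) * (r ^ ((2⁻¹:ℝ)))⁻¹ := by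
    rw [h4]
    field_simp
  have h6 : (2:ℝ) ^ ((2⁻¹:ℝ)) ≤ 2 := by
    calc (2:ℝ) ^ ((2⁻¹:ℝ)) ≤ 2 ^ (1:ℝ) :=
      Real.rpow_le_rpow_of_exponent_le (by norm_num) (by norm_num)
    _ = 2 := Real.rpow_one 2
  rw [h1, h7]
  calc (t ^ ((2⁻¹:ℝ)))⁻¹ ≤ ((r/2) ^ ((2⁻¹:ℝ)))⁻¹ := h3
  _ = 2 ^ ((2⁻¹:ℝ)) * (r ^ ((2⁻¹:ℝ)))⁻¹ := h5
  _ ≤ 2 * (r ^ ((2⁻¹:ℝ)))⁻¹ := mul_le_mul_of_nonneg_right h6 (by positivity)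


lemma growth_aux_NUM (α β C s₀ D : ℝ) (hα : 0 < α) (hαβ : α ≤ β) (hβ : β < 1/2)
    (hC : 0 < C) (hs₀ : 0 < s₀) (hs₀1 : s₀ ≤ 1)
    (hs₀q : s₀ ^ ((2⁻¹:ℝ)) ≤ α/(32*C)) (hD : 32*C/(α*s₀) ≤ D) :
    ∫⁻ s in Ioi (0:ℝ), ENNReal.ofReal
      ((Real.exp (-((1-β)*s)) * (1-Real.exp (-s)) ^ (-α)/α
        + Real.exp (-((1-α)*s)) * (1-Real.exp (-s)) ^ (-β)/β) * Real.exp (-(D*s)))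
      ≤ ENNReal.ofReal (1/(2*C)) := by
  have hβ0 : 0 < β := lt_of_lt_of_le hα hαβ
  have hα2 : α ≤ 1/2 := hαβ.trans hβ.le
  have hDpos : 0 < D := lt_of_lt_of_le (by positivity) hD
  -- generic bracket bound
  have hbracket : ∀ s w : ℝ, 0 < s → 0 < w → w ≤ 1 → w/2 ≤ 1 - Real.exp (-s) →
      Real.exp (-((1-β)*s)) * (1-Real.exp (-s)) ^ (-α)/α
        + Real.exp (-((1-α)*s)) * (1-Real.exp (-s)) ^ (-β)/β
      ≤ (4/α) * w ^ (-(2⁻¹:ℝ)) := by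
    intro s w hs hw hw1 hwt
    have ht0 : 0 < 1 - Real.exp (-s) := by
      have := Real.exp_lt_one_iff.2 (by linarith : -s < 0)
      linarith
    have ht1 : 1 - Real.exp (-s) ≤ 1 := by
      have := Real.exp_pos (-s); linarith
    set t : ℝ := 1 - Real.exp (-s) with htdef
    have hta : t ^ (-α) ≤ t ^ (-(2⁻¹:ℝ)) :=
      Real.rpow_le_rpow_of_exponent_ge ht0 ht1 (by linarith)
    have htb : t ^ (-β) ≤ t ^ (-(2⁻¹:ℝ)) :=
      Real.rpow_le_rpow_of_exponent_ge ht0 ht1 (by linarith)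
    have hth : t ^ (-(2⁻¹:ℝ)) ≤ 2 * w ^ (-(2⁻¹:ℝ)) := growth_aux_half w hw hw1 t hwt ht1
    have he1 : Real.exp (-((1-β)*s)) ≤ 1 := Real.exp_le_one_iff.2 (by nlinarith)
    have he2 : Real.exp (-((1-α)*s)) ≤ 1 := Real.exp_le_one_iff.2 (by nlinarith)
    have hw2 : (0:ℝ) ≤ w ^ (-(2⁻¹:ℝ)) := Real.rpow_nonneg hw.le _
    have htn : (0:ℝ) ≤ t ^ (-(2⁻¹:ℝ)) := Real.rpow_nonneg ht0.le _
    have hA : Real.exp (-((1-β)*s)) * t ^ (-α) ≤ t ^ (-(2⁻¹:ℝ)) := by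
      calc Real.exp (-((1-β)*s)) * t ^ (-α) ≤ 1 * t ^ (-(2⁻¹:ℝ)) :=
        mul_le_mul he1 hta (Real.rpow_nonneg ht0.le _) one_pos.le
      _ = t ^ (-(2⁻¹:ℝ)) := one_mul _
    have hB : Real.exp (-((1-α)*s)) * t ^ (-β) ≤ t ^ (-(2⁻¹:ℝ)) := by
      calc Real.exp (-((1-α)*s)) * t ^ (-β) ≤ 1 * t ^ (-(2⁻¹:ℝ)) :=
        mul_le_mul he2 htb (Real.rpow_nonneg ht0.le _) one_pos.le
      _ = t ^ (-(2⁻¹:ℝ)) := one_mul _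
    have hBA : t ^ (-(2⁻¹:ℝ))/β ≤ t ^ (-(2⁻¹:ℝ))/α := by
      apply div_le_div_of_nonneg_left htn hα hαβ
    calc Real.exp (-((1-β)*s)) * t ^ (-α)/α + Real.exp (-((1-α)*s)) * t ^ (-β)/β
        ≤ t ^ (-(2⁻¹:ℝ))/α + t ^ (-(2⁻¹:ℝ))/β := by
          gcongr <;> first | exact hA | exact hB
    _ ≤ t ^ (-(2⁻¹:ℝ))/α + t ^ (-(2⁻¹:ℝ))/α := by gcongr
    _ = 2 * (t ^ (-(2⁻¹:ℝ)))/α := by ring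
    _ ≤ 2 * (2 * w ^ (-(2⁻¹:ℝ)))/α := by gcongr
    _ = (4/α) * w ^ (-(2⁻¹:ℝ)) := by ring
  -- pointwise bound on (0, s₀]
  have hpt1 : ∀ s ∈ Ioc (0:ℝ) s₀,
      ENNReal.ofReal ((Real.exp (-((1-β)*s)) * (1-Real.exp (-s)) ^ (-α)/α
        + Real.exp (-((1-α)*s)) * (1-Real.exp (-s)) ^ (-β)/β) * Real.exp (-(D*s)))
      ≤ ENNReal.ofReal ((4/α) * s ^ (-(2⁻¹:ℝ))) := by
    intro s hs
    apply ENNReal.ofReal_le_ofReal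
    have hs1 : s ≤ 1 := le_trans hs.2 hs₀1
    have hbr := hbracket s s hs.1 hs.1 hs1 (growth_aux_one_sub_exp hs.1.le hs1)
    have he3 : Real.exp (-(D*s)) ≤ 1 := Real.exp_le_one_iff.2 (by nlinarith [hs.1])
    have hbrnn : (0:ℝ) ≤ (4/α) * s ^ (-(2⁻¹:ℝ)) := by
      have := Real.rpow_nonneg hs.1.le (-(2⁻¹:ℝ)); positivity
    calc (Real.exp (-((1-β)*s)) * (1-Real.exp (-s)) ^ (-α)/α
        + Real.exp (-((1-α)*s)) * (1-Real.exp (-s)) ^ (-β)/β) * Real.exp (-(D*s))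
        ≤ ((4/α) * s ^ (-(2⁻¹:ℝ))) * 1 := by
          apply mul_le_mul hbr he3 (Real.exp_pos _).le hbrnn
    _ = (4/α) * s ^ (-(2⁻¹:ℝ)) := mul_one _
  -- pointwise bound on (s₀, ∞)
  have hpt2 : ∀ s ∈ Ioi s₀,
      ENNReal.ofReal ((Real.exp (-((1-β)*s)) * (1-Real.exp (-s)) ^ (-α)/α
        + Real.exp (-((1-α)*s)) * (1-Real.exp (-s)) ^ (-β)/β) * Real.exp (-(D*s)))
      ≤ ENNReal.ofReal ((8/(α*s₀)) * Real.exp (0 - D*s)) := by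
    intro s hs
    apply ENNReal.ofReal_le_ofReal
    have hss : s₀ < s := hs
    have hwt : s₀/2 ≤ 1 - Real.exp (-s) := by
      have h1 := growth_aux_one_sub_exp hs₀.le hs₀1
      have h2 : Real.exp (-s) ≤ Real.exp (-s₀) := Real.exp_le_exp.2 (by linarith)
      linarith
    have hbr := hbracket s s₀ (lt_trans hs₀ hss) hs₀ hs₀1 hwt
    have hs₀r : s₀ ^ (-(2⁻¹:ℝ)) ≤ s₀⁻¹ := by
      have := Real.rpow_le_rpow_of_exponent_ge hs₀ hs₀1 (by norm_num : (-1:ℝ) ≤ -(2⁻¹:ℝ))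
      rwa [Real.rpow_neg_one] at this
    have hbr2 : (4/α) * s₀ ^ (-(2⁻¹:ℝ)) ≤ 8/(α*s₀) := by
      calc (4/α) * s₀ ^ (-(2⁻¹:ℝ)) ≤ (4/α) * s₀⁻¹ := by
            apply mul_le_mul_of_nonneg_left hs₀r (by positivity)
      _ = 4/(α*s₀) := by field_simp
      _ ≤ 8/(α*s₀) := by gcongr <;> norm_num
    have h0 : (0:ℝ) - D*s = -(D*s) := by ring
    rw [h0]
    exact mul_le_mul (hbr.trans hbr2) le_rfl (Real.exp_pos _).le (by positivity)
  -- split the integral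
  have hsplit : Ioc (0:ℝ) s₀ ∪ Ioi s₀ = Ioi 0 := Ioc_union_Ioi_eq_Ioi hs₀.le
  have hdisj : Disjoint (Ioc (0:ℝ) s₀) (Ioi s₀) := by
    rw [Set.disjoint_left]
    rintro z hz1 hz2
    exact absurd hz1.2 (not_le.2 hz2)
  rw [← hsplit, lintegral_union measurableSet_Ioi hdisj]
  have hI1 : ∫⁻ s in Ioc (0:ℝ) s₀, ENNReal.ofReal
      ((Real.exp (-((1-β)*s)) * (1-Real.exp (-s)) ^ (-α)/α
        + Real.exp (-((1-α)*s)) * (1-Real.exp (-s)) ^ (-β)/β) * Real.exp (-(D*s)))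
      ≤ ENNReal.ofReal (1/(4*C)) := by
    calc _ ≤ ∫⁻ s in Ioc (0:ℝ) s₀, ENNReal.ofReal ((4/α) * s ^ (-(2⁻¹:ℝ))) :=
      setLIntegral_mono' measurableSet_Ioc hpt1
    _ = ∫⁻ s in Ioc (0:ℝ) s₀, ENNReal.ofReal (4/α) * ENNReal.ofReal (s ^ (-(2⁻¹:ℝ))) := by
        apply lintegral_congr
        intro s
        rw [ENNReal.ofReal_mul (by positivity)]
    _ = ENNReal.ofReal (4/α) * ∫⁻ s in Ioc (0:ℝ) s₀, ENNReal.ofReal (s ^ (-(2⁻¹:ℝ))) :=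
        lintegral_const_mul' _ _ ENNReal.ofReal_ne_top
    _ = ENNReal.ofReal (4/α) * ENNReal.ofReal (2 * s₀ ^ ((2⁻¹:ℝ))) := by
        rw [growth_aux_lint_rpow hs₀]
    _ = ENNReal.ofReal ((4/α) * (2 * s₀ ^ ((2⁻¹:ℝ)))) := by
        rw [← ENNReal.ofReal_mul (by positivity)]
    _ ≤ ENNReal.ofReal (1/(4*C)) := by
        apply ENNReal.ofReal_le_ofReal
        have h1 : (4/α) * (2 * s₀ ^ ((2⁻¹:ℝ))) ≤ (4/α) * (2 * (α/(32*C))) := by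
          gcongr
        calc (4/α) * (2 * s₀ ^ ((2⁻¹:ℝ))) ≤ (4/α) * (2 * (α/(32*C))) := h1
        _ = 1/(4*C) := by field_simp; ring
  have hI2 : ∫⁻ s in Ioi s₀, ENNReal.ofReal
      ((Real.exp (-((1-β)*s)) * (1-Real.exp (-s)) ^ (-α)/α
        + Real.exp (-((1-α)*s)) * (1-Real.exp (-s)) ^ (-β)/β) * Real.exp (-(D*s)))
      ≤ ENNReal.ofReal (1/(4*C)) := by
    calc _ ≤ ∫⁻ s in Ioi s₀, ENNReal.ofReal ((8/(α*s₀)) * Real.exp (0 - D*s)) :=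
      setLIntegral_mono' measurableSet_Ioi hpt2
    _ = ∫⁻ s in Ioi s₀, ENNReal.ofReal (8/(α*s₀)) * ENNReal.ofReal (Real.exp (0 - D*s)) := by
        apply lintegral_congr
        intro s
        rw [ENNReal.ofReal_mul (by positivity)]
    _ = ENNReal.ofReal (8/(α*s₀)) * ∫⁻ s in Ioi s₀, ENNReal.ofReal (Real.exp (0 - D*s)) :=
        lintegral_const_mul' _ _ ENNReal.ofReal_ne_top
    _ = ENNReal.ofReal (8/(α*s₀)) * ENNReal.ofReal (Real.exp (0 - D*s₀)/D) := by
        rw [growth_aux_lint_exp 0 hDpos s₀]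
    _ = ENNReal.ofReal ((8/(α*s₀)) * (Real.exp (0 - D*s₀)/D)) := by
        rw [← ENNReal.ofReal_mul (by positivity)]
    _ ≤ ENNReal.ofReal (1/(4*C)) := by
        apply ENNReal.ofReal_le_ofReal
        have he : Real.exp (0 - D*s₀) ≤ 1 := Real.exp_le_one_iff.2 (by nlinarith)
        calc (8/(α*s₀)) * (Real.exp (0 - D*s₀)/D) ≤ (8/(α*s₀)) * (1/D) := by
              gcongr
        _ = 8/(α*s₀*D) := by field_simp
        _ ≤ 1/(4*C) := by
              rw [div_le_div_iff₀ (by positivity) (by positivity)]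
              have h2 : 32*C/(α*s₀) * (α * s₀) ≤ D * (α*s₀) := by
                apply mul_le_mul_of_nonneg_right hD (by positivity)
              rw [div_mul_cancel₀] at h2
              · nlinarith
              · positivity
  calc _ ≤ ENNReal.ofReal (1/(4*C)) + ENNReal.ofReal (1/(4*C)) := add_le_add hI1 hI2
  _ = ENNReal.ofReal (1/(4*C) + 1/(4*C)) := (ENNReal.ofReal_add (by positivity) (by positivity)).symm
  _ = ENNReal.ofReal (1/(2*C)) := by
      congr 1
      field_simp
      ring


/-- The integrand of the `H`-equation. -/
noncomputable def growthG (K : ℝ → ℝ → ℝ) (hl lam : ℝ) (H : ℝ → ℝ) (w Y Z : ℝ) : ℝ :=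
  hl * Real.exp ((1-2*lam)*(Y - w)) * Real.exp (-(2*lam)*(Z - w))
    * K (Real.exp (Y - w)) (Real.exp (Z - w)) * H Y * H Z

lemma growthG_scale (K : ℝ → ℝ → ℝ) (hl lam : ℝ) (H : ℝ → ℝ)
    (hhom : ∀ a x y : ℝ, 0 < a → 0 < x → 0 < y → K (a*x) (a*y) = a ^ (2*lam) * K x y)
    (x₀ y Y Z : ℝ) :
    growthG K hl lam H y Y Z
      = Real.exp (-((1-2*lam)*(y - x₀))) * growthG K hl lam H x₀ Y Z := by
  unfold growthG
  have h1 : Real.exp (Y - y) = Real.exp (-(y - x₀)) * Real.exp (Y - x₀) := by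
    rw [← Real.exp_add]; congr 1; ring
  have h2 : Real.exp (Z - y) = Real.exp (-(y - x₀)) * Real.exp (Z - x₀) := by
    rw [← Real.exp_add]; congr 1; ring
  have h3 : K (Real.exp (Y - y)) (Real.exp (Z - y))
      = (Real.exp (-(y - x₀))) ^ (2*lam) * K (Real.exp (Y - x₀)) (Real.exp (Z - x₀)) := by
    rw [h1, h2]
    exact hhom _ _ _ (Real.exp_pos _) (Real.exp_pos _) (Real.exp_pos _)
  have h4 : (Real.exp (-(y - x₀))) ^ (2*lam) = Real.exp (-(y - x₀) * (2*lam)) :=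
    (Real.exp_mul _ _).symm
  have h5 : Real.exp ((1-2*lam)*(Y - y)) * Real.exp (-(2*lam)*(Z - y))
        * Real.exp (-(y - x₀) * (2*lam))
      = Real.exp (-((1-2*lam)*(y - x₀)))
        * (Real.exp ((1-2*lam)*(Y - x₀)) * Real.exp (-(2*lam)*(Z - x₀))) := by
    simp only [← Real.exp_add]
    congr 1
    ring
  rw [h3, h4]
  linear_combination (hl * K (Real.exp (Y - x₀)) (Real.exp (Z - x₀)) * H Y * H Z) * h5

lemma growthG_upper (K : ℝ → ℝ → ℝ) (K₀ α β lam hl M : ℝ) (H : ℝ → ℝ)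
    (hsum : α + β = 2*lam)
    (hup : ∀ x y : ℝ, 0 < x → 0 < y → K x y ≤ K₀ * (x ^ α * y ^ β + x ^ β * y ^ α))
    (hH0 : ∀ X, 0 ≤ H X) (hHM : ∀ X, H X ≤ M)
    (hl0 : 0 ≤ hl) (hK₀ : 0 ≤ K₀) (hM : 0 ≤ M) (y Y Z : ℝ) :
    growthG K hl lam H y Y Z
      ≤ hl*K₀*M*(H Y)*(Real.exp ((1-β)*(Y-y)) * Real.exp (α*y - α*Z))
        + hl*K₀*M*(H Y)*(Real.exp ((1-α)*(Y-y)) * Real.exp (β*y - β*Z)) := by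
  unfold growthG
  have hKb := hup (Real.exp (Y - y)) (Real.exp (Z - y)) (Real.exp_pos _) (Real.exp_pos _)
  have hKnn : (0:ℝ) ≤ K₀ * ((Real.exp (Y - y)) ^ α * (Real.exp (Z - y)) ^ β
      + (Real.exp (Y - y)) ^ β * (Real.exp (Z - y)) ^ α) := by
    have := Real.rpow_nonneg (Real.exp_pos (Y - y)).le α
    have := Real.rpow_nonneg (Real.exp_pos (Z - y)).le β
    have := Real.rpow_nonneg (Real.exp_pos (Y - y)).le β
    have := Real.rpow_nonneg (Real.exp_pos (Z - y)).le α
    positivity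
  have step1 : growthG K hl lam H y Y Z
      ≤ hl * Real.exp ((1-2*lam)*(Y - y)) * Real.exp (-(2*lam)*(Z - y))
        * (K₀ * ((Real.exp (Y - y)) ^ α * (Real.exp (Z - y)) ^ β
          + (Real.exp (Y - y)) ^ β * (Real.exp (Z - y)) ^ α)) * H Y * M := by
    unfold growthG
    gcongr
    all_goals first
      | exact hKb
      | exact hHM Z
      | exact hH0 Z
      | exact hH0 Y
      | positivity
      | exact mul_nonneg (mul_nonneg (mul_nonneg (mul_nonneg hl0 (Real.exp_pos _).le)
          (Real.exp_pos _).le) hKnn) (hH0 Y)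
  refine step1.trans (le_of_eq ?_)
  have e1 : (Real.exp (Y - y)) ^ α = Real.exp (α * (Y - y)) := by
    rw [← Real.exp_mul, mul_comm]
  have e2 : (Real.exp (Z - y)) ^ β = Real.exp (β * (Z - y)) := by
    rw [← Real.exp_mul, mul_comm]
  have e3 : (Real.exp (Y - y)) ^ β = Real.exp (β * (Y - y)) := by
    rw [← Real.exp_mul, mul_comm]
  have e4 : (Real.exp (Z - y)) ^ α = Real.exp (α * (Z - y)) := by
    rw [← Real.exp_mul, mul_comm]
  rw [e1, e2, e3, e4]
  have E1 : Real.exp ((1-2*lam)*(Y - y)) * Real.exp (-(2*lam)*(Z - y))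
      * (Real.exp (α * (Y - y)) * Real.exp (β * (Z - y)))
      = Real.exp ((1-β)*(Y-y)) * Real.exp (α*y - α*Z) := by
    simp only [← Real.exp_add]
    congr 1
    linear_combination (Y + Z - 2*y) * hsum
  have E2 : Real.exp ((1-2*lam)*(Y - y)) * Real.exp (-(2*lam)*(Z - y))
      * (Real.exp (β * (Y - y)) * Real.exp (α * (Z - y)))
      = Real.exp ((1-α)*(Y-y)) * Real.exp (β*y - β*Z) := by
    simp only [← Real.exp_add]
    congr 1
    linear_combination (Y + Z - 2*y) * hsum
  linear_combination (hl*K₀*M*(H Y)) * E1 + (hl*K₀*M*(H Y)) * E2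

lemma growthG_inner_bound (K : ℝ → ℝ → ℝ) (K₀ α β lam hl M : ℝ) (H : ℝ → ℝ)
    (hsum : α + β = 2*lam) (hα : 0 < α) (hβ0 : 0 < β)
    (hup : ∀ x y : ℝ, 0 < x → 0 < y → K x y ≤ K₀ * (x ^ α * y ^ β + x ^ β * y ^ α))
    (hH0 : ∀ X, 0 ≤ H X) (hHM : ∀ X, H X ≤ M)
    (hl0 : 0 ≤ hl) (hK₀ : 0 ≤ K₀) (hM : 0 ≤ M) (y Y : ℝ) (hY : Y < y) :
    ∫⁻ Z in Ioi (y + Real.log (1 - Real.exp (Y - y))),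
        ENNReal.ofReal (growthG K hl lam H y Y Z)
      ≤ ENNReal.ofReal ((hl*K₀*M) * H Y *
          (Real.exp (-((1-β)*(y-Y))) * (1-Real.exp (-(y-Y))) ^ (-α)/α
            + Real.exp (-((1-α)*(y-Y))) * (1-Real.exp (-(y-Y))) ^ (-β)/β)) := by
  set c : ℝ := y + Real.log (1 - Real.exp (Y - y)) with hcdef
  set A : ℝ := hl*K₀*M*(H Y)*Real.exp ((1-β)*(Y-y)) with hAdef
  set B : ℝ := hl*K₀*M*(H Y)*Real.exp ((1-α)*(Y-y)) with hBdef
  have hAnn : 0 ≤ A := by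
    have := hH0 Y
    rw [hAdef]; positivity
  have hBnn : 0 ≤ B := by
    have := hH0 Y
    rw [hBdef]; positivity
  have ht0 : (0:ℝ) < 1 - Real.exp (Y - y) := by
    have := Real.exp_lt_one_iff.2 (by linarith : Y - y < 0)
    linarith
  have hpt : ∀ Z ∈ Ioi c, ENNReal.ofReal (growthG K hl lam H y Y Z)
      ≤ ENNReal.ofReal (A * Real.exp (α*y - α*Z)) + ENNReal.ofReal (B * Real.exp (β*y - β*Z)) := by
    intro Z _
    have h1 := growthG_upper K K₀ α β lam hl M H hsum hup hH0 hHM hl0 hK₀ hM y Y Z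
    have h2 : ENNReal.ofReal (growthG K hl lam H y Y Z)
        ≤ ENNReal.ofReal (A * Real.exp (α*y - α*Z) + B * Real.exp (β*y - β*Z)) := by
      apply ENNReal.ofReal_le_ofReal
      calc growthG K hl lam H y Y Z ≤ _ := h1
      _ = A * Real.exp (α*y - α*Z) + B * Real.exp (β*y - β*Z) := by
          rw [hAdef, hBdef]; ring
    refine h2.trans (le_of_eq (ENNReal.ofReal_add ?_ ?_))
    · positivity
    · positivity
  have hmeas : Measurable (fun Z => ENNReal.ofReal (A * Real.exp (α*y - α*Z))) := by
    apply Measurable.ennreal_ofReal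
    fun_prop
  calc ∫⁻ Z in Ioi c, ENNReal.ofReal (growthG K hl lam H y Y Z)
      ≤ ∫⁻ Z in Ioi c, (ENNReal.ofReal (A * Real.exp (α*y - α*Z))
          + ENNReal.ofReal (B * Real.exp (β*y - β*Z))) :=
        setLIntegral_mono' measurableSet_Ioi hpt
  _ = (∫⁻ Z in Ioi c, ENNReal.ofReal (A * Real.exp (α*y - α*Z)))
      + ∫⁻ Z in Ioi c, ENNReal.ofReal (B * Real.exp (β*y - β*Z)) :=
        lintegral_add_left hmeas _
  _ = ENNReal.ofReal A * (∫⁻ Z in Ioi c, ENNReal.ofReal (Real.exp (α*y - α*Z)))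
      + ENNReal.ofReal B * ∫⁻ Z in Ioi c, ENNReal.ofReal (Real.exp (β*y - β*Z)) := by
        rw [← lintegral_const_mul' _ _ ENNReal.ofReal_ne_top,
          ← lintegral_const_mul' _ _ ENNReal.ofReal_ne_top]
        congr 1 <;> (apply lintegral_congr; intro Z; rw [← ENNReal.ofReal_mul (by assumption)])
  _ = ENNReal.ofReal A * ENNReal.ofReal (Real.exp (α*y - α*c)/α)
      + ENNReal.ofReal B * ENNReal.ofReal (Real.exp (β*y - β*c)/β) := by
        rw [growth_aux_lint_exp _ hα, growth_aux_lint_exp _ hβ0]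
  _ = ENNReal.ofReal (A * (Real.exp (α*y - α*c)/α) + B * (Real.exp (β*y - β*c)/β)) := by
        rw [← ENNReal.ofReal_mul hAnn, ← ENNReal.ofReal_mul hBnn,
          ← ENNReal.ofReal_add (by positivity) (by positivity)]
  _ = ENNReal.ofReal ((hl*K₀*M) * H Y *
          (Real.exp (-((1-β)*(y-Y))) * (1-Real.exp (-(y-Y))) ^ (-α)/α
            + Real.exp (-((1-α)*(y-Y))) * (1-Real.exp (-(y-Y))) ^ (-β)/β)) := by
        congr 1
        have hlog : ∀ γ : ℝ, Real.exp (γ*y - γ*c) = (1 - Real.exp (Y - y)) ^ (-γ) := by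
          intro γ
          rw [hcdef, Real.rpow_def_of_pos ht0]
          congr 1
          ring
        rw [hlog α, hlog β, hAdef, hBdef]
        rw [show Y - y = -(y - Y) by ring]
        rw [show (1-β)*(-(y-Y)) = -((1-β)*(y-Y)) by ring,
          show (1-α)*(-(y-Y)) = -((1-α)*(y-Y)) by ring]
        ring

lemma growth_aux_dom {w Y : ℝ} (hYw : Y < w) :
    w + Real.log (1 - Real.exp (Y - w)) = Real.log (Real.exp w - Real.exp Y) := by
  have h2 : (0:ℝ) < Real.exp w - Real.exp Y := by
    have := Real.exp_lt_exp.2 hYw; linarith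
  have h3 : 1 - Real.exp (Y - w) = (Real.exp w - Real.exp Y) / Real.exp w := by
    rw [Real.exp_sub]; field_simp
  rw [h3, Real.log_div h2.ne' (Real.exp_ne_zero w), Real.log_exp]
  ring

lemma growthG_far_inner (K : ℝ → ℝ → ℝ) (hl lam : ℝ) (H : ℝ → ℝ)
    (hhom : ∀ a x y : ℝ, 0 < a → 0 < x → 0 < y → K (a*x) (a*y) = a ^ (2*lam) * K x y)
    (x₀ y Y : ℝ) (hY : Y < x₀) (hx₀y : x₀ < y) :
    ∫⁻ Z in Ioi (y + Real.log (1 - Real.exp (Y - y))),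
        ENNReal.ofReal (growthG K hl lam H y Y Z)
      ≤ ENNReal.ofReal (Real.exp (-((1-2*lam)*(y - x₀))))
        * ∫⁻ Z in Ioi (x₀ + Real.log (1 - Real.exp (Y - x₀))),
            ENNReal.ofReal (growthG K hl lam H x₀ Y Z) := by
  have hsub : Ioi (y + Real.log (1 - Real.exp (Y - y)))
      ⊆ Ioi (x₀ + Real.log (1 - Real.exp (Y - x₀))) := by
    apply Ioi_subset_Ioi
    rw [growth_aux_dom hY, growth_aux_dom (hY.trans hx₀y)]
    apply Real.log_le_log
    · have := Real.exp_lt_exp.2 hY; linarith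
    · have := Real.exp_le_exp.2 hx₀y.le; linarith
  calc ∫⁻ Z in Ioi (y + Real.log (1 - Real.exp (Y - y))),
        ENNReal.ofReal (growthG K hl lam H y Y Z)
      = ∫⁻ Z in Ioi (y + Real.log (1 - Real.exp (Y - y))),
          ENNReal.ofReal (Real.exp (-((1-2*lam)*(y - x₀))))
            * ENNReal.ofReal (growthG K hl lam H x₀ Y Z) := by
        apply lintegral_congr
        intro Z
        rw [growthG_scale K hl lam H hhom x₀ y Y Z,
          ENNReal.ofReal_mul (Real.exp_pos _).le]
  _ = ENNReal.ofReal (Real.exp (-((1-2*lam)*(y - x₀))))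
      * ∫⁻ Z in Ioi (y + Real.log (1 - Real.exp (Y - y))),
          ENNReal.ofReal (growthG K hl lam H x₀ Y Z) :=
        lintegral_const_mul' _ _ ENNReal.ofReal_ne_top
  _ ≤ _ := mul_le_mul_right (lintegral_mono_set hsub) _

set_option maxHeartbeats 2000000 in
/-- exponential growth control for solutions of the `H`-equation. -/
theorem growth_estimate
    (K : ℝ → ℝ → ℝ) (K₀ k₀ α β lam hl M : ℝ)
    (hK₀ : 0 < K₀) (hk₀ : 0 < k₀)
    (hα : 0 < α) (hαβ : α ≤ β) (hβ : β < 1/2)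
    (hsum : α + β = 2*lam) (hlam : lam ∈ Set.Ioo (0:ℝ) (1/2))
    (hC1 : ContDiffOn ℝ 1 (Function.uncurry K) (Set.Ioi (0:ℝ) ×ˢ Set.Ioi (0:ℝ)))
    (hsymm : ∀ x y : ℝ, K x y = K y x)
    (hhom : ∀ a x y : ℝ, 0 < a → 0 < x → 0 < y → K (a*x) (a*y) = a ^ (2*lam) * K x y)
    (hnonneg : ∀ x y : ℝ, 0 < x → 0 < y → 0 ≤ K x y)
    (hup : ∀ x y : ℝ, 0 < x → 0 < y → K x y ≤ K₀ * (x ^ α * y ^ β + x ^ β * y ^ α))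
    (hlow : ∀ x y : ℝ, x ∈ Set.Icc (1/4 : ℝ) 1 → y ∈ Set.Icc (1/4 : ℝ) 1 → k₀ ≤ K x y)
    (hlpos : 0 < hl) (hM : 0 < M)
    (H : ℝ → ℝ) (hHmeas : Measurable H) (hH0 : ∀ X, 0 ≤ H X) (hHM : ∀ X, H X ≤ M)
    (heq : ∀ X : ℝ,
      ENNReal.ofReal (H X)
        = ∫⁻ Y in Set.Iio X,
            ∫⁻ Z in Set.Ioi (X + Real.log (1 - Real.exp (Y - X))),
              ENNReal.ofReal
                (hl * Real.exp ((1-2*lam)*(Y - X)) * Real.exp (-(2*lam)*(Z - X))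
                  * K (Real.exp (Y - X)) (Real.exp (Z - X)) * H Y * H Z)) :
    ∃ D > (0:ℝ), ∀ X₀ X : ℝ, X₀ < X →
      H X ≤ 2 * H X₀ * Real.exp (D * (X - X₀)) := by
  obtain ⟨hlam0, hlam2⟩ := hlam
  have hβ0 : 0 < β := lt_of_lt_of_le hα hαβ
  have hα2 : α < 1/2 := lt_of_le_of_lt hαβ hβ
  set C : ℝ := hl * K₀ * M with hCdef
  have hCpos : 0 < C := by positivity
  set q : ℝ := α / (32 * C) with hqdef
  have hqpos : 0 < q := by positivity
  set s₀ : ℝ := min 1 (q*q) with hs₀def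
  have hs₀pos : 0 < s₀ := lt_min one_pos (by positivity)
  have hs₀le1 : s₀ ≤ 1 := min_le_left _ _
  set D : ℝ := max 1 (32 * C / (α * s₀)) with hDdef
  have hD1 : (1:ℝ) ≤ D := le_max_left _ _
  have hDpos : 0 < D := lt_of_lt_of_le one_pos hD1
  -- the integrable decay profile
  set φ : ℝ → ℝ := fun s =>
    (Real.exp (-((1-β)*s)) * (1-Real.exp (-s)) ^ (-α)/α
      + Real.exp (-((1-α)*s)) * (1-Real.exp (-s)) ^ (-β)/β) * Real.exp (-(D*s)) with hφdef
  have hφnn : ∀ s : ℝ, 0 < s → 0 ≤ φ s := by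
    intro s hs
    have h1 : (0:ℝ) ≤ 1 - Real.exp (-s) := by
      have := Real.exp_lt_one_iff.2 (by linarith : -s < 0)
      linarith
    have := Real.rpow_nonneg h1 (-α)
    have := Real.rpow_nonneg h1 (-β)
    positivity
  -- numerical bound on the profile integral
  have hs₀q : s₀ ^ ((2⁻¹:ℝ)) ≤ α/(32*C) := by
    have h1 : s₀ ≤ q*q := min_le_right _ _
    have h2 : s₀ ^ ((2⁻¹:ℝ)) ≤ (q*q) ^ ((2⁻¹:ℝ)) :=
      Real.rpow_le_rpow hs₀pos.le h1 (by norm_num)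
    have h3 : (q*q) ^ ((2⁻¹:ℝ)) = q := by
      rw [show ((2⁻¹:ℝ)) = 1/2 by norm_num, ← Real.sqrt_eq_rpow, Real.sqrt_mul_self hqpos.le]
    rw [h3] at h2
    rw [hqdef] at h2
    exact h2
  have hNUM : ∫⁻ s in Ioi (0:ℝ), ENNReal.ofReal (φ s) ≤ ENNReal.ofReal (1/(2*C)) := by
    simp only [hφdef]
    exact growth_aux_NUM α β C s₀ D hα hαβ hβ hCpos hs₀pos hs₀le1 hs₀q (le_max_right _ _)
  refine ⟨D, hDpos, ?_⟩
  intro x₀ x hx₀x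
  -- the normalized function and its supremum
  set u : ℝ → ℝ := fun y => H y * Real.exp (-(D * (y - x₀)))
  have hubd : ∀ y ∈ Ici x₀, u y ≤ M := by
    intro y hy
    have h1 : Real.exp (-(D * (y - x₀))) ≤ 1 := by
      rw [Real.exp_le_one_iff]
      have : (0:ℝ) ≤ y - x₀ := by simpa [sub_nonneg] using hy
      nlinarith
    calc u y ≤ M * 1 := mul_le_mul (hHM y) h1 (Real.exp_pos _).le hM.le
    _ = M := mul_one M
  have hne : (u '' Ici x₀).Nonempty := ⟨u x₀, mem_image_of_mem u self_mem_Ici⟩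
  have hbdd : BddAbove (u '' Ici x₀) := by
    refine ⟨M, ?_⟩
    rintro _ ⟨y, hy, rfl⟩
    exact hubd y hy
  set S : ℝ := sSup (u '' Ici x₀) with hSdef
  have hux₀ : u x₀ = H x₀ := by simp [u]
  have hS0 : 0 ≤ S := by
    have := le_csSup hbdd (mem_image_of_mem u self_mem_Ici)
    rw [hux₀] at this
    exact le_trans (hH0 x₀) this
  have huS : ∀ y ∈ Ici x₀, u y ≤ S := fun y hy => le_csSup hbdd (mem_image_of_mem u hy)
  have hHS : ∀ y ∈ Ici x₀, H y ≤ S * Real.exp (D * (y - x₀)) := by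
    intro y hy
    have h1 := huS y hy
    have h2 : H y = u y * Real.exp (D * (y - x₀)) := by
      simp only [u]
      rw [mul_assoc, ← Real.exp_add]
      simp
    rw [h2]
    exact mul_le_mul_of_nonneg_right h1 (Real.exp_pos _).le
  have heqG : ∀ w : ℝ, ENNReal.ofReal (H w)
      = ∫⁻ Y in Iio w, ∫⁻ Z in Ioi (w + Real.log (1 - Real.exp (Y - w))),
          ENNReal.ofReal (growthG K hl lam H w Y Z) := fun w => heq w
  have hEST : ∀ y : ℝ, x₀ < y → H y ≤ H x₀ + Real.exp (D*(y - x₀)) * (S/2) := by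
    intro y hy
    set ε : ℝ := Real.exp (-((1-2*lam)*(y - x₀))) with hεdef
    have hεpos : 0 < ε := Real.exp_pos _
    have hεle1 : ε ≤ 1 := Real.exp_le_one_iff.2 (by nlinarith)
    -- far-field contribution
    have hFar : ∫⁻ Y in Iio x₀, ∫⁻ Z in Ioi (y + Real.log (1 - Real.exp (Y - y))),
          ENNReal.ofReal (growthG K hl lam H y Y Z)
        ≤ ENNReal.ofReal (ε * H x₀) := by
      calc ∫⁻ Y in Iio x₀, ∫⁻ Z in Ioi (y + Real.log (1 - Real.exp (Y - y))),
            ENNReal.ofReal (growthG K hl lam H y Y Z)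
          ≤ ∫⁻ Y in Iio x₀, ENNReal.ofReal ε
              * ∫⁻ Z in Ioi (x₀ + Real.log (1 - Real.exp (Y - x₀))),
                  ENNReal.ofReal (growthG K hl lam H x₀ Y Z) :=
            setLIntegral_mono' measurableSet_Iio
              (fun Y hY => growthG_far_inner K hl lam H hhom x₀ y Y hY hy)
      _ = ENNReal.ofReal ε * ∫⁻ Y in Iio x₀,
            ∫⁻ Z in Ioi (x₀ + Real.log (1 - Real.exp (Y - x₀))),
              ENNReal.ofReal (growthG K hl lam H x₀ Y Z) :=
            lintegral_const_mul' _ _ ENNReal.ofReal_ne_top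
      _ = ENNReal.ofReal ε * ENNReal.ofReal (H x₀) := by rw [← heqG x₀]
      _ = ENNReal.ofReal (ε * H x₀) := (ENNReal.ofReal_mul hεpos.le).symm
    -- near-field contribution
    have hCSnn : (0:ℝ) ≤ C*S*Real.exp (D*(y-x₀)) :=
      mul_nonneg (mul_nonneg hCpos.le hS0) (Real.exp_pos _).le
    have hNear : ∫⁻ Y in Ico x₀ y, ∫⁻ Z in Ioi (y + Real.log (1 - Real.exp (Y - y))),
          ENNReal.ofReal (growthG K hl lam H y Y Z)
        ≤ ENNReal.ofReal (Real.exp (D*(y-x₀)) * (S/2)) := by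
      have hC2 : ∀ Y ∈ Ico x₀ y, ∫⁻ Z in Ioi (y + Real.log (1 - Real.exp (Y - y))),
            ENNReal.ofReal (growthG K hl lam H y Y Z)
          ≤ ENNReal.ofReal ((C*S*Real.exp (D*(y-x₀))) * φ (y - Y)) := by
        intro Y hY
        have h1 := growthG_inner_bound K K₀ α β lam hl M H hsum hα hβ0 hup hH0 hHM
          hlpos.le hK₀.le hM.le y Y hY.2
        refine h1.trans (ENNReal.ofReal_le_ofReal ?_)
        have ht'0 : (0:ℝ) < 1 - Real.exp (-(y-Y)) := by
          have := Real.exp_lt_one_iff.2 (by linarith [hY.2] : -(y-Y) < 0)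
          linarith
        have hr1 : (0:ℝ) ≤ (1-Real.exp (-(y-Y))) ^ (-α) := Real.rpow_nonneg ht'0.le _
        have hr2 : (0:ℝ) ≤ (1-Real.exp (-(y-Y))) ^ (-β) := Real.rpow_nonneg ht'0.le _
        have hbrnn : (0:ℝ) ≤ Real.exp (-((1-β)*(y-Y))) * (1-Real.exp (-(y-Y))) ^ (-α)/α
            + Real.exp (-((1-α)*(y-Y))) * (1-Real.exp (-(y-Y))) ^ (-β)/β := by positivity
        have hHY := hHS Y hY.1
        have hexpid : Real.exp (D*(y-x₀)) * Real.exp (-(D*(y-Y))) = Real.exp (D*(Y-x₀)) := by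
          rw [← Real.exp_add]; congr 1; ring
        have hφval : φ (y - Y) = (Real.exp (-((1-β)*(y-Y))) * (1-Real.exp (-(y-Y))) ^ (-α)/α
            + Real.exp (-((1-α)*(y-Y))) * (1-Real.exp (-(y-Y))) ^ (-β)/β)
              * Real.exp (-(D*(y-Y))) := by rw [hφdef]
        rw [hφval]
        calc hl*K₀*M * H Y * (Real.exp (-((1-β)*(y-Y))) * (1-Real.exp (-(y-Y))) ^ (-α)/α
              + Real.exp (-((1-α)*(y-Y))) * (1-Real.exp (-(y-Y))) ^ (-β)/β)
            ≤ hl*K₀*M * (S * Real.exp (D*(Y-x₀))) * (Real.exp (-((1-β)*(y-Y)))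
                * (1-Real.exp (-(y-Y))) ^ (-α)/α
              + Real.exp (-((1-α)*(y-Y))) * (1-Real.exp (-(y-Y))) ^ (-β)/β) := by
              apply mul_le_mul_of_nonneg_right _ hbrnn
              apply mul_le_mul_of_nonneg_left hHY (by positivity)
        _ = (C*S*Real.exp (D*(y-x₀))) * ((Real.exp (-((1-β)*(y-Y)))
                * (1-Real.exp (-(y-Y))) ^ (-α)/α
              + Real.exp (-((1-α)*(y-Y))) * (1-Real.exp (-(y-Y))) ^ (-β)/β)
                * Real.exp (-(D*(y-Y)))) := by
              rw [hCdef, ← hexpid]; ring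
      calc ∫⁻ Y in Ico x₀ y, ∫⁻ Z in Ioi (y + Real.log (1 - Real.exp (Y - y))),
            ENNReal.ofReal (growthG K hl lam H y Y Z)
          ≤ ∫⁻ Y in Ico x₀ y, ENNReal.ofReal ((C*S*Real.exp (D*(y-x₀))) * φ (y - Y)) :=
            setLIntegral_mono' measurableSet_Ico hC2
      _ = ENNReal.ofReal (C*S*Real.exp (D*(y-x₀)))
            * ∫⁻ Y in Ico x₀ y, ENNReal.ofReal (φ (y-Y)) := by
            rw [← lintegral_const_mul' _ _ ENNReal.ofReal_ne_top]
            apply lintegral_congr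
            intro Y
            rw [← ENNReal.ofReal_mul hCSnn]
      _ ≤ ENNReal.ofReal (C*S*Real.exp (D*(y-x₀)))
            * ∫⁻ s in Ioi (0:ℝ), ENNReal.ofReal (φ s) := by
            apply mul_le_mul_right
            calc ∫⁻ Y in Ico x₀ y, ENNReal.ofReal (φ (y - Y))
                ≤ ∫⁻ Y in (fun Y => y - Y) ⁻¹' (Ioi 0), ENNReal.ofReal (φ (y - Y)) := by
                  apply lintegral_mono_set
                  intro z hz
                  simp only [Set.mem_preimage, Set.mem_Ioi]
                  have := hz.2
                  simp only [Set.mem_Ico] at hz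
                  linarith [hz.2]
            _ = ∫⁻ s in Ioi (0:ℝ), ENNReal.ofReal (φ s) :=
                  growth_aux_lint_reflect y (fun s => ENNReal.ofReal (φ s)) (Ioi 0)
      _ ≤ ENNReal.ofReal (C*S*Real.exp (D*(y-x₀))) * ENNReal.ofReal (1/(2*C)) :=
            mul_le_mul_right hNUM _
      _ = ENNReal.ofReal (Real.exp (D*(y-x₀)) * (S/2)) := by
            rw [← ENNReal.ofReal_mul hCSnn]
            congr 1
            field_simp
    -- combine both parts
    have hdisj2 : Disjoint (Iio x₀) (Ico x₀ y) := by
      rw [Set.disjoint_left]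
      rintro z hz1 hz2
      exact absurd hz2.1 (not_le.2 hz1)
    have hcomb : ENNReal.ofReal (H y)
        ≤ ENNReal.ofReal (ε * H x₀ + Real.exp (D*(y-x₀)) * (S/2)) := by
      rw [heqG y, ← Iio_union_Ico_eq_Iio hy.le,
        lintegral_union measurableSet_Ico hdisj2,
        ENNReal.ofReal_add (mul_nonneg hεpos.le (hH0 x₀))
          (mul_nonneg (Real.exp_pos _).le (by linarith [hS0]))]
      exact add_le_add hFar hNear
    have hreal : H y ≤ ε * H x₀ + Real.exp (D*(y-x₀)) * (S/2) := by
      have hnn : (0:ℝ) ≤ ε * H x₀ + Real.exp (D*(y-x₀)) * (S/2) := by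
        have := hH0 x₀
        positivity
      exact (ENNReal.ofReal_le_ofReal_iff hnn).1 hcomb
    have h8 : ε * H x₀ ≤ H x₀ := by
      nlinarith [hH0 x₀]
    linarith

  -- conclude via the supremum
  have hSle : S ≤ H x₀ + S/2 := by
    apply csSup_le hne
    rintro _ ⟨y, hy, rfl⟩
    rcases eq_or_lt_of_le (mem_Ici.mp hy) with h | h
    · rw [← h, hux₀]
      linarith
    · have h1 := hEST y h
      have h2 : u y ≤ (H x₀ + Real.exp (D*(y-x₀)) * (S/2)) * Real.exp (-(D * (y - x₀))) := by
        apply mul_le_mul_of_nonneg_right h1 (Real.exp_pos _).le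
      have h3 : Real.exp (-(D * (y - x₀))) ≤ 1 := by
        rw [Real.exp_le_one_iff]
        nlinarith [le_of_lt h]
      have h4 : Real.exp (D*(y-x₀)) * Real.exp (-(D * (y - x₀))) = 1 := by
        rw [← Real.exp_add]; simp
      calc u y ≤ (H x₀ + Real.exp (D*(y-x₀)) * (S/2)) * Real.exp (-(D * (y - x₀))) := h2
      _ = H x₀ * Real.exp (-(D * (y - x₀)))
          + (Real.exp (D*(y-x₀)) * Real.exp (-(D * (y - x₀)))) * (S/2) := by ring
      _ ≤ H x₀ * 1 + 1 * (S/2) := by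
          rw [h4]
          have := hH0 x₀
          have := mul_le_mul_of_nonneg_left h3 this
          linarith
      _ = H x₀ + S/2 := by ring
  have hS2 : S ≤ 2 * H x₀ := by linarith
  have h1 := hHS x (le_of_lt hx₀x)
  calc H x ≤ S * Real.exp (D * (x - x₀)) := h1
  _ ≤ (2 * H x₀) * Real.exp (D * (x - x₀)) :=
      mul_le_mul_of_nonneg_right hS2 (Real.exp_pos _).le
  _ = 2 * H x₀ * Real.exp (D * (x - x₀)) := by ring
end

section
/- For λ ∈ (0,1/2), 0 < α ≤ β < 1/2 with α + β = 2λ, and any ε ∈ (0,1], one has ∫_{-ε}^0 ∫_{log(1-e^Y)}^∞ [e^{(1-2λ+α)Y} e^{(β-2λ)Z} + e^{(1-2λ+β)Y} e^{(α-2λ)Z}] dZ dY ≤ C ε^{1-2λ+α} for a constant C depending only on λ, α, β; in particular this double integral tends to 0 as ε → 0. -/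
open MeasureTheory Real Set Filter

lemma lint_exp_Ioi {b : ℝ} (hb : 0 < b) (t : ℝ) :
    ∫⁻ z in Set.Ioi t, ENNReal.ofReal (Real.exp (-b * z)) =
      ENNReal.ofReal (Real.exp (-b * t) / b) := by
  have hint : IntegrableOn (fun x => Real.exp (-b * x)) (Set.Ioi t) :=
    exp_neg_integrableOn_Ioi t hb
  have hd : ∀ x : ℝ, HasDerivAt (fun x => -Real.exp (-b * x) / b) (Real.exp (-b * x)) x := by
    intro x
    have h1 : HasDerivAt (fun x : ℝ => -b * x) (-b) x := by
      simpa using (hasDerivAt_id x).const_mul (-b)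
    have h2 := (Real.hasDerivAt_exp (-b * x)).comp x h1
    have h3 := (h2.div_const b).neg
    refine HasDerivAt.congr_deriv (f' := -(Real.exp (-b * x) * -b / b)) ?_ (by field_simp)
    convert h3 using 1
    funext y; simp [Function.comp, neg_div]
  have ht : Tendsto (fun x => -Real.exp (-b * x) / b) atTop (nhds 0) := by
    have h1 : Tendsto (fun x : ℝ => -b * x) atTop atBot := by
      have := (tendsto_id.const_mul_atTop hb : Tendsto (fun x : ℝ => b * x) atTop atTop)
      simpa [neg_mul] using tendsto_neg_atBot_iff.mpr this
    have h2 := Real.tendsto_exp_atBot.comp h1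
    have h3 := (h2.div_const b).neg
    simpa [Function.comp, neg_div] using h3
  have hval : ∫ x in Set.Ioi t, Real.exp (-b * x) = Real.exp (-b * t) / b := by
    have := integral_Ioi_of_hasDerivAt_of_tendsto
      (hd t).continuousAt.continuousWithinAt (fun x _ => hd x) hint ht
    rw [this]; ring
  rw [← ofReal_integral_eq_lintegral_ofReal hint
    (Filter.Eventually.of_forall fun x => (Real.exp_pos _).le), hval]

lemma lint_rpow {c : ℝ} (hc : -1 < c) {ε : ℝ} (hε : 0 < ε) :
    ∫⁻ y in Set.Ioo (-ε) (0:ℝ), ENNReal.ofReal ((-y) ^ c) =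
      ENNReal.ofReal (ε ^ (c + 1) / (c + 1)) := by
  have hpre : (fun y : ℝ => -y) ⁻¹' Set.Ioo 0 ε = Set.Ioo (-ε) 0 := by
    ext y
    simp only [Set.mem_preimage, Set.mem_Ioo]
    constructor <;> rintro ⟨h1, h2⟩ <;> constructor <;> linarith
  have hsub := (Measure.measurePreserving_neg (volume : Measure ℝ)).setLIntegral_comp_preimage_emb
    (Homeomorph.neg ℝ).measurableEmbedding (fun x => ENNReal.ofReal (x ^ c)) (Set.Ioo 0 ε)
  have hstep : ∫⁻ y in Set.Ioo (-ε) (0:ℝ), ENNReal.ofReal ((-y) ^ c) =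
      ∫⁻ x in Set.Ioo (0:ℝ) ε, ENNReal.ofReal (x ^ c) := by
    rw [← hpre] at *
    simpa using hsub
  rw [hstep, setLIntegral_congr (Ioo_ae_eq_Ioc (a := (0:ℝ)) (b := ε))]
  have hint : IntegrableOn (fun x : ℝ => x ^ c) (Set.Ioc 0 ε) := by
    have := intervalIntegral.intervalIntegrable_rpow' (a := 0) (b := ε) hc
    rwa [intervalIntegrable_iff_integrableOn_Ioc_of_le hε.le] at this
  rw [← ofReal_integral_eq_lintegral_ofReal hint
    ((ae_restrict_iff' measurableSet_Ioc).mpr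
      (Filter.Eventually.of_forall fun x hx => Real.rpow_nonneg hx.1.le _))]
  congr 1
  rw [← intervalIntegral.integral_of_le hε.le, integral_rpow (Or.inl hc),
    Real.zero_rpow (by linarith)]
  ring

/-- smallness of the corner integral. -/
theorem corner_integral_small
    (lam α β : ℝ) (hlam : lam ∈ Set.Ioo (0:ℝ) (1/2))
    (hα : 0 < α) (hαβ : α ≤ β) (hβ : β < 1/2) (hsum : α + β = 2*lam) :
    ∃ C > (0:ℝ),
      (∀ ε ∈ Set.Ioc (0:ℝ) 1,
        (∫⁻ Y in Set.Ioo (-ε) (0:ℝ),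
            ∫⁻ Z in Set.Ioi (Real.log (1 - Real.exp Y)),
              ENNReal.ofReal
                (Real.exp ((1-2*lam+α)*Y) * Real.exp ((β-2*lam)*Z)
                  + Real.exp ((1-2*lam+β)*Y) * Real.exp ((α-2*lam)*Z)))
          ≤ ENNReal.ofReal (C * ε ^ (1-2*lam+α)))
      ∧ Filter.Tendsto
          (fun ε : ℝ =>
            ∫⁻ Y in Set.Ioo (-ε) (0:ℝ),
              ∫⁻ Z in Set.Ioi (Real.log (1 - Real.exp Y)),
                ENNReal.ofReal
                  (Real.exp ((1-2*lam+α)*Y) * Real.exp ((β-2*lam)*Z)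
                    + Real.exp ((1-2*lam+β)*Y) * Real.exp ((α-2*lam)*Z)))
          (nhdsWithin (0:ℝ) (Set.Ioi 0)) (nhds 0) := by
  obtain ⟨hlam0, hlam2⟩ := hlam
  have hβpos : 0 < β := lt_of_lt_of_le hα hαβ
  have hβ1 : (0:ℝ) < 1 - β := by linarith
  have e1 : 1 - 2*lam + α = 1 - β := by linarith
  have e2 : 1 - 2*lam + β = 1 - α := by linarith
  have e3 : β - 2*lam = -α := by linarith
  have e4 : α - 2*lam = -β := by linarith
  set K : ℝ := Real.exp β * (1/α + 1/β) with hK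
  have hKpos : 0 < K := by positivity
  set C : ℝ := K / (1 - β) with hC
  have hCpos : 0 < C := by positivity
  have mα : Measurable fun Z : ℝ => ENNReal.ofReal (Real.exp (-α * Z)) :=
    (Real.measurable_exp.comp (measurable_id.const_mul (-α))).ennreal_ofReal
  have mβ : Measurable fun Z : ℝ => ENNReal.ofReal (Real.exp (-β * Z)) :=
    (Real.measurable_exp.comp (measurable_id.const_mul (-β))).ennreal_ofReal
  have key : ∀ ε ∈ Set.Ioc (0:ℝ) 1,
      (∫⁻ Y in Set.Ioo (-ε) (0:ℝ),
          ∫⁻ Z in Set.Ioi (Real.log (1 - Real.exp Y)),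
            ENNReal.ofReal
              (Real.exp ((1-2*lam+α)*Y) * Real.exp ((β-2*lam)*Z)
                + Real.exp ((1-2*lam+β)*Y) * Real.exp ((α-2*lam)*Z)))
        ≤ ENNReal.ofReal (C * ε ^ (1-2*lam+α)) := by
    rintro ε ⟨hε0, hε1⟩
    rw [e1, e2, e3, e4]
    calc
      (∫⁻ Y in Set.Ioo (-ε) (0:ℝ),
          ∫⁻ Z in Set.Ioi (Real.log (1 - Real.exp Y)),
            ENNReal.ofReal
              (Real.exp ((1-β)*Y) * Real.exp (-α*Z)
                + Real.exp ((1-α)*Y) * Real.exp (-β*Z)))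
          ≤ ∫⁻ Y in Set.Ioo (-ε) (0:ℝ), ENNReal.ofReal (K * (-Y) ^ (-β)) := by
        refine lintegral_mono_ae ((ae_restrict_iff' measurableSet_Ioo).mpr
          (Filter.Eventually.of_forall ?_))
        rintro Y ⟨hY1, hY2⟩
        have hYm1 : -1 ≤ Y := by linarith
        have hx : 0 < 1 - Real.exp Y := by
          have : Real.exp Y < 1 := Real.exp_lt_one_iff.mpr hY2
          linarith
        have hx1 : 1 - Real.exp Y ≤ 1 := by have := Real.exp_pos Y; linarith
        have hmY : 0 < -Y := by linarith
        set t := Real.log (1 - Real.exp Y) with hT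
        have hrw1 : Real.exp (-α * t) = (1 - Real.exp Y) ^ (-α) := by
          rw [Real.rpow_def_of_pos hx, mul_comm]
        have hrw2 : Real.exp (-β * t) = (1 - Real.exp Y) ^ (-β) := by
          rw [Real.rpow_def_of_pos hx, mul_comm]
        have hsplit : ∀ Z : ℝ,
            ENNReal.ofReal (Real.exp ((1-β)*Y) * Real.exp (-α*Z)
              + Real.exp ((1-α)*Y) * Real.exp (-β*Z))
            = ENNReal.ofReal (Real.exp ((1-β)*Y)) * ENNReal.ofReal (Real.exp (-α*Z))
              + ENNReal.ofReal (Real.exp ((1-α)*Y)) * ENNReal.ofReal (Real.exp (-β*Z)) := by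
          intro Z
          rw [ENNReal.ofReal_add (by positivity) (by positivity),
            ENNReal.ofReal_mul (Real.exp_pos _).le, ENNReal.ofReal_mul (Real.exp_pos _).le]
        have hinner : (∫⁻ Z in Set.Ioi t,
            ENNReal.ofReal (Real.exp ((1-β)*Y) * Real.exp (-α*Z)
              + Real.exp ((1-α)*Y) * Real.exp (-β*Z)))
            = ENNReal.ofReal (Real.exp ((1-β)*Y) * ((1 - Real.exp Y) ^ (-α) / α)
              + Real.exp ((1-α)*Y) * ((1 - Real.exp Y) ^ (-β) / β)) := by
          simp only [hsplit]
          rw [lintegral_add_left (mα.const_mul _), lintegral_const_mul _ mα,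
            lintegral_const_mul _ mβ, lint_exp_Ioi hα t, lint_exp_Ioi hβpos t,
            hrw1, hrw2, ← ENNReal.ofReal_mul (Real.exp_pos _).le,
            ← ENNReal.ofReal_mul (Real.exp_pos _).le,
            ← ENNReal.ofReal_add (by positivity) (by positivity)]
        rw [hinner]
        apply ENNReal.ofReal_le_ofReal
        have hlow : Real.exp (-1) * (-Y) ≤ 1 - Real.exp Y := by
          have h1 : -Y + 1 ≤ Real.exp (-Y) := Real.add_one_le_exp (-Y)
          have h2 : Real.exp Y * Real.exp (-Y) = 1 := by rw [← Real.exp_add]; simp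
          have h4 : Real.exp (-1) ≤ Real.exp Y := Real.exp_le_exp.mpr hYm1
          nlinarith [Real.exp_pos Y]
        have hq : (1 - Real.exp Y) ^ (-β) ≤ (Real.exp (-1) * (-Y)) ^ (-β) :=
          Real.rpow_le_rpow_of_nonpos (by positivity) hlow (by linarith)
        have hp : (1 - Real.exp Y) ^ (-α) ≤ (1 - Real.exp Y) ^ (-β) :=
          Real.rpow_le_rpow_of_exponent_ge hx hx1 (by linarith)
        have hM : (Real.exp (-1) * (-Y)) ^ (-β) = Real.exp β * (-Y) ^ (-β) := by
          rw [Real.mul_rpow (Real.exp_pos _).le hmY.le,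
            Real.rpow_def_of_pos (Real.exp_pos _), Real.log_exp]
          norm_num
        have hA : Real.exp ((1-β)*Y) ≤ 1 :=
          Real.exp_le_one_iff.mpr (mul_nonpos_of_nonneg_of_nonpos (by linarith) hY2.le)
        have hB : Real.exp ((1-α)*Y) ≤ 1 :=
          Real.exp_le_one_iff.mpr (mul_nonpos_of_nonneg_of_nonpos (by linarith) hY2.le)
        have hq' : (1 - Real.exp Y) ^ (-β) ≤ Real.exp β * (-Y) ^ (-β) := hM ▸ hq
        have hp' : (1 - Real.exp Y) ^ (-α) ≤ Real.exp β * (-Y) ^ (-β) := hp.trans hq'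
        calc
          Real.exp ((1-β)*Y) * ((1 - Real.exp Y) ^ (-α) / α)
              + Real.exp ((1-α)*Y) * ((1 - Real.exp Y) ^ (-β) / β)
              ≤ 1 * ((1 - Real.exp Y) ^ (-α) / α) + 1 * ((1 - Real.exp Y) ^ (-β) / β) := by
            have hnn1 : 0 ≤ (1 - Real.exp Y) ^ (-α) / α := by positivity
            have hnn2 : 0 ≤ (1 - Real.exp Y) ^ (-β) / β := by positivity
            gcongr
          _ = (1 - Real.exp Y) ^ (-α) / α + (1 - Real.exp Y) ^ (-β) / β := by ring
          _ ≤ (Real.exp β * (-Y) ^ (-β)) / α + (Real.exp β * (-Y) ^ (-β)) / β := by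
            gcongr
          _ = K * (-Y) ^ (-β) := by
            rw [hK]; field_simp
      _ = ENNReal.ofReal K * ∫⁻ Y in Set.Ioo (-ε) (0:ℝ), ENNReal.ofReal ((-Y) ^ (-β)) := by
        have mY : Measurable fun Y : ℝ => ENNReal.ofReal ((-Y) ^ (-β)) :=
          (measurable_neg.pow_const _).ennreal_ofReal
        simp_rw [ENNReal.ofReal_mul hKpos.le]
        rw [lintegral_const_mul _ mY]
      _ = ENNReal.ofReal K * ENNReal.ofReal (ε ^ (-β + 1) / (-β + 1)) := by
        rw [lint_rpow (by linarith) hε0]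
      _ = ENNReal.ofReal (C * ε ^ (1 - β)) := by
        rw [← ENNReal.ofReal_mul hKpos.le]
        congr 1
        have h : -β + 1 = 1 - β := by ring
        rw [h, hC]
        field_simp
  refine ⟨C, hCpos, key, ?_⟩
  have hp : 0 < 1 - 2*lam + α := by linarith
  have hupper : Tendsto (fun ε : ℝ => ENNReal.ofReal (C * ε ^ (1-2*lam+α)))
      (nhdsWithin (0:ℝ) (Set.Ioi 0)) (nhds 0) := by
    have h1 : ContinuousAt (fun x : ℝ => C * x ^ (1-2*lam+α)) 0 :=
      continuousAt_const.mul (Real.continuousAt_rpow_const 0 _ (Or.inr hp.le))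
    have h2 := (ENNReal.continuous_ofReal.continuousAt.comp h1).tendsto
    have h2' : Tendsto (fun ε : ℝ => ENNReal.ofReal (C * ε ^ (1-2*lam+α))) (nhds 0) (nhds 0) := by
      simpa [Function.comp_def, Real.zero_rpow hp.ne'] using h2
    exact h2'.mono_left nhdsWithin_le_nhds
  refine tendsto_of_tendsto_of_tendsto_of_le_of_le' tendsto_const_nhds hupper
    (Filter.Eventually.of_forall fun ε => zero_le) ?_
  filter_upwards [Ioc_mem_nhdsGT_of_mem (by norm_num : (0:ℝ) ∈ Set.Ico (0:ℝ) 1)] with ε hε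
  exact key ε hε
end
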